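/- arXiv:1607.04715 — 8 statements merged into one kernel-verified Lean document; each statement's English description precedes it below -/
import Mathlib

section
/- Let b ∈ ℂ and r,t ∈ {0,1} with r ≠ t. Suppose g ∈ ℂ[∂,λ] satisfies g(∂+λ,0)·(∂+tλ+b) − g(∂,0)·(∂+rλ+b) = (1/2)λ·g(∂,λ) for all ∂,λ. Then g = 0. -/
open Polynomial

/-- Evaluation of a two-variable polynomial `f ∈ ℂ[∂][λ]` at `∂ = x`, `λ = l`. -/
noncomputable def ev (f : Polynomial (Polynomial ℂ)) (x l : ℂ) : ℂ :=
  (f.map (Polynomial.evalRingHom l)).eval x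

lemma ev_eq (g : Polynomial (Polynomial ℂ)) (x l : ℂ) :
    (g.eval (Polynomial.C x)).eval l = ev g x l := by
  have h2 := Polynomial.hom_eval₂ g (RingHom.id (Polynomial ℂ)) (evalRingHom l) (Polynomial.C x)
  simp only [RingHomCompTriple.comp_eq, coe_evalRingHom, eval_C, RingHom.comp_id] at h2
  rw [ev, eval_map]
  rw [Polynomial.eval, ← h2]
  rfl

/-- Let `b ∈ ℂ` and `r,t ∈ {0,1}` with `r ≠ t`.  If `g ∈ ℂ[∂,λ]` satisfies
`g(∂+λ,0)·(∂+tλ+b) − g(∂,0)·(∂+rλ+b) = (1/2)λ·g(∂,λ)` for all `∂,λ`, then `g = 0`. -/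
theorem stmt4 (b r t : ℂ) (hr : r = 0 ∨ r = 1) (ht : t = 0 ∨ t = 1) (hrt : r ≠ t)
    (g : Polynomial (Polynomial ℂ))
    (h : ∀ x l : ℂ,
      ev g (x + l) 0 * (x + t*l + b) - ev g x 0 * (x + r*l + b) = (1/2) * l * ev g x l) :
    g = 0 := by
  set φ : Polynomial ℂ := g.map (evalRingHom 0) with hφdef
  have e0 : ∀ y : ℂ, ev g y 0 = φ.eval y := fun y => rfl
  -- Step A: pointwise ODE
  have hode : ∀ x : ℂ, φ.derivative.eval x * (x + b) = (1/2 + r - t) * φ.eval x := by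
    intro x
    have hP : (taylor x φ) * Polynomial.C (x+b) + (taylor x φ) * Polynomial.C t * X
        - (Polynomial.C (φ.eval x * (x+b)) + Polynomial.C (φ.eval x * r) * X)
        - Polynomial.C (1/2 : ℂ) * (g.eval (Polynomial.C x)) * X = 0 := by
      apply Polynomial.funext
      intro l
      have h1 := h x l
      rw [e0, e0, ← ev_eq] at h1
      simp only [eval_sub, eval_add, eval_mul, eval_C, eval_X, taylor_apply, eval_comp,
        eval_zero]
      rw [add_comm l x]
      linear_combination h1
    have h2 := congrArg (fun p => p.coeff 1) hP
    simp only [coeff_sub, coeff_add, coeff_mul_C, coeff_mul_X, coeff_C, taylor_coeff_one,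
      taylor_coeff_zero, coeff_zero] at h2
    norm_num at h2
    rw [coeff_zero_eq_eval_zero, ev_eq g x 0, e0] at h2
    linear_combination h2
  have hODE : φ.derivative * (X + Polynomial.C b) = Polynomial.C (1/2 + r - t) * φ := by
    apply Polynomial.funext
    intro x
    simpa using hode x
  have hc : (1/2 + r - t : ℂ) ≠ 0 := by
    rcases hr with h1 | h1 <;> rcases ht with h2 | h2 <;> subst h1 <;> subst h2 <;>
      first | (exact absurd rfl hrt) | norm_num
  -- Step B: φ = 0
  have hφ0 : φ = 0 := by
    by_contra hne
    rcases Nat.eq_zero_or_pos φ.natDegree with hn0 | hnpos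
    · obtain ⟨a, ha⟩ := natDegree_eq_zero.mp hn0
      rw [← ha, derivative_C, zero_mul] at hODE
      have ha0 : (1/2 + r - t) * a = 0 := by
        have h3 := congrArg (fun p => p.coeff 0) hODE
        simpa using h3.symm
      have : a = 0 := by
        rcases mul_eq_zero.mp ha0 with h' | h'
        · exact absurd h' hc
        · exact h'
      rw [← ha, this] at hne
      simp at hne
    · obtain ⟨m, hm⟩ : ∃ m, φ.natDegree = m + 1 := ⟨φ.natDegree - 1, by omega⟩
      have h2 := congrArg (fun p => p.coeff (m+1)) hODE
      simp only [mul_add, coeff_add, coeff_mul_C, coeff_mul_X, coeff_C_mul,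
        coeff_derivative] at h2
      rw [show m+1+1 = φ.natDegree+1 by omega, coeff_natDegree_succ_eq_zero] at h2
      have hlc : φ.coeff (m+1) ≠ 0 := by
        rw [← hm, Polynomial.coeff_natDegree]
        exact leadingCoeff_ne_zero.mpr hne
      have hnn : ((m:ℂ) + 1) = 1/2 + r - t := by
        apply mul_left_cancel₀ hlc
        linear_combination h2
      rcases hr with h1 | h1 <;> rcases ht with h3 | h3 <;> subst h1 <;> subst h3
      · exact absurd rfl hrt
      · -- r=0, t=1 : m+1 = -1/2
        have hcast : ((2*m + 3 : ℕ) : ℂ) = 0 := by push_cast; linear_combination 2 * hnn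
        have : (2*m + 3 : ℕ) = 0 := by exact_mod_cast hcast
        omega
      · -- r=1, t=0 : m+1 = 3/2
        have hcast : ((2*m + 2 : ℕ) : ℂ) = ((3:ℕ) : ℂ) := by
          push_cast; linear_combination 2 * hnn
        have : (2*m + 2 : ℕ) = 3 := by exact_mod_cast hcast
        omega
      · exact absurd rfl hrt
  -- Step C: g = 0
  have hz : ∀ x l : ℂ, l ≠ 0 → ev g x l = 0 := by
    intro x l hl
    have h1 := h x l
    rw [e0, e0, hφ0] at h1
    simp only [eval_zero, zero_mul, sub_zero, sub_self] at h1
    rcases mul_eq_zero.mp h1.symm with h' | h'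
    · rcases mul_eq_zero.mp h' with h'' | h''
      · norm_num at h''
      · exact absurd h'' hl
    · exact h'
  apply Polynomial.ext
  intro i
  rw [coeff_zero]
  apply Polynomial.eq_zero_of_infinite_isRoot
  apply Set.Infinite.mono (s := {l : ℂ | l ≠ 0})
  · intro l hl
    have hmap : g.map (evalRingHom l) = 0 := by
      apply Polynomial.funext
      intro x
      simpa [ev] using hz x l hl
    have h3 : (g.map (evalRingHom l)).coeff i = 0 := by rw [hmap]; simp
    rw [coeff_map] at h3
    exact h3
  · exact (Set.finite_singleton (0:ℂ)).infinite_compl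
end

section
/- Suppose families s_i ∈ ℂ[λ] (i ∈ ℤ) satisfy, for fixed a,a',b,b' ∈ ℂ and all i,j ∈ ℤ: s_i(μ)·((a'−a)λ + b'−b − μ) + λ·s_i(μ) = ((1/2)λ − μ)·s_{i+j}(λ+μ) as polynomials in λ,μ, and some s_i is nonzero. Then all s_i are equal to a single nonzero constant γ, a' = a − 1/2, and b' = b. -/
open Polynomial

/-- Suppose `s_i ∈ ℂ[λ]` (`i ∈ ℤ`) satisfy, for fixed `a,a',b,b' ∈ ℂ` and all
`i,j ∈ ℤ` and all `λ,μ`: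
`s_i(μ)·((a'−a)λ + b'−b − μ) + λ·s_i(μ) = ((1/2)λ − μ)·s_{i+j}(λ+μ)`,
and some `s_i` is nonzero.  Then all `s_i` equal a single nonzero constant `γ`,
`a' = a − 1/2`, and `b' = b`. -/
theorem stmt6 (a a' b b' : ℂ) (s : ℤ → Polynomial ℂ)
    (h : ∀ (i j : ℤ) (l m : ℂ),
      (s i).eval m * ((a' - a)*l + b' - b - m) + l * (s i).eval m
        = ((1/2)*l - m) * (s (i+j)).eval (l + m))
    (hne : ∃ i : ℤ, s i ≠ 0) :
    (∃ γ : ℂ, γ ≠ 0 ∧ ∀ i : ℤ, s i = Polynomial.C γ) ∧ a' = a - 1/2 ∧ b' = b := by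
  obtain ⟨i0, hi0⟩ := hne
  -- find a point where s i0 is nonzero
  obtain ⟨m0, hm0⟩ : ∃ m : ℂ, (s i0).eval m ≠ 0 := by
    by_contra hc
    push_neg at hc
    exact hi0 (Polynomial.funext (fun x => by simp [hc x]))
  -- b' = b
  have hb : b' = b := by
    have h1 := h i0 0 0 m0
    simp only [add_zero, zero_add, mul_zero, zero_mul] at h1
    have h2 : (s i0).eval m0 * (b' - b) = 0 := by linear_combination h1
    rcases mul_eq_zero.mp h2 with h3 | h3
    · exact absurd h3 hm0
    · linear_combination h3
  subst hb
  set γ : ℂ := 2 * (a' - a + 1) * (s i0).eval 0 with hγdef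
  -- all s are the constant γ
  have hconst : ∀ k : ℤ, s k = Polynomial.C γ := by
    intro k
    have hk : i0 + (k - i0) = k := by ring
    have hagree : ∀ l : ℂ, l ≠ 0 → (s k).eval l = γ := by
      intro l hl
      have h1 := h i0 (k - i0) l 0
      rw [hk] at h1
      simp only [add_zero, mul_zero, sub_zero] at h1
      have h2 : l * ((s k).eval l) = l * γ := by
        rw [hγdef]; linear_combination -2 * h1
      exact mul_left_cancel₀ hl h2
    have : s k - Polynomial.C γ = 0 := by
      apply Polynomial.eq_zero_of_infinite_isRoot
      apply Set.Infinite.mono (s := {x : ℂ | x ≠ 0})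
      · intro x hx
        simp only [Set.mem_setOf_eq, Polynomial.IsRoot, Polynomial.eval_sub,
          Polynomial.eval_C]
        rw [hagree x hx]; ring
      · exact (Set.finite_singleton (0:ℂ)).infinite_compl
    linear_combination this
  have hγ0 : γ ≠ 0 := fun hg => hi0 (by rw [hconst i0, hg, map_zero])
  -- a' = a - 1/2
  have ha : a' = a - 1/2 := by
    have h1 := h i0 0 1 0
    rw [hconst i0, hconst (i0 + 0)] at h1
    simp only [Polynomial.eval_C] at h1
    have h2 : γ * (a' - (a - 1/2)) = 0 := by linear_combination h1
    rcases mul_eq_zero.mp h2 with h3 | h3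
    · exact absurd h3 hγ0
    · linear_combination h3
  exact ⟨⟨γ, hγ0, hconst⟩, ha, rfl⟩
end

section
/- Let a,b ∈ ℂ and suppose polynomials t_i ∈ ℂ[λ] (i ∈ ℤ) satisfy −((1/2)λ+μ)·t_i(μ) + (a−1/2)λ² + bλ = ((1/2)λ−μ)·t_{i+j}(λ+μ) for all i,j ∈ ℤ. Then t_i(λ) = (2a−1)λ + b for all i. -/
open Polynomial

/-- If `t_i ∈ ℂ[λ]` (`i ∈ ℤ`) satisfy
`−((1/2)λ+μ)·t_i(μ) + (a−1/2)λ² + bλ = ((1/2)λ−μ)·t_{i+j}(λ+μ)` for all `i,j ∈ ℤ` and all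
`λ,μ`, then `t_i(λ) = (2a−1)λ + b` for all `i`. -/
theorem stmt7 (a b : ℂ) (t : ℤ → Polynomial ℂ)
    (h : ∀ (i j : ℤ) (l m : ℂ),
      -((1/2)*l + m) * (t i).eval m + (a - 1/2)*l^2 + b*l
        = ((1/2)*l - m) * (t (i+j)).eval (l + m)) :
    ∀ (i : ℤ) (l : ℂ), (t i).eval l = (2*a - 1)*l + b := by
  intro i l
  have key : ∀ m : ℂ, m ≠ 0 → (t i).eval m = (2*a-1)*m + b := by
    intro m hm
    have h0 := h i 0 (2*m) m
    rw [add_zero] at h0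
    have h2 : (2*m) * (t i).eval m = (2*m) * ((2*a-1)*m + b) := by
      linear_combination -h0
    exact mul_left_cancel₀ (mul_ne_zero two_ne_zero hm) h2
  have hp : t i - (C (2*a-1) * X + C b) = 0 := by
    apply Polynomial.eq_zero_of_infinite_isRoot
    apply Set.Infinite.mono (s := {x : ℂ | x ≠ 0})
    · intro x hx
      simp only [Set.mem_setOf_eq, IsRoot.def, eval_sub, eval_add, eval_mul, eval_C, eval_X]
      rw [key x hx]; ring
    · have : {x : ℂ | x ≠ 0} = ({0} : Set ℂ)ᶜ := by ext x; simp
      rw [this]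
      exact (Set.finite_singleton 0).infinite_compl
  have := sub_eq_zero.mp hp
  rw [this]
  simp
end

section
/- Let V = ℂ[∂]x ⊕ ℂ[∂]y with even part ℂ[∂]x and odd part ℂ[∂]y. For a,b ∈ ℂ, c ∈ ℂ*, the actions L_i _λ x = cⁱ(∂+aλ+b)x, L_i _λ y = cⁱ(∂+(a+1/2)λ+b)y, G_i _λ x = cⁱ y, G_i _λ y = cⁱ(∂+2aλ+b)x define a conformal module structure over the loop super-Virasoro conformal superalgebra 𝔠𝔩𝔰: in particular [L_i _λ L_j]_{λ+μ} v = L_i _λ(L_j _μ v) − L_j _μ(L_i _λ v), [L_i _λ G_j]_{λ+μ} v = L_i _λ(G_j _μ v) − G_j _μ(L_i _λ v), and [G_i _λ G_j]_{λ+μ} v = G_i _λ(G_j _μ v) + G_j _μ(G_i _λ v) for v ∈ {x,y}. -/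
open Polynomial

/-- `ℂ[∂]`. -/
abbrev P := Polynomial ℂ
/-- The free `ℂ[∂]`-module `V = ℂ[∂]x ⊕ ℂ[∂]y`: the first component is the coefficient of
the even generator `x`, the second that of the odd generator `y`. -/
abbrev V := P × P

/-- Substitution `∂ ↦ ∂ + λ`. -/
noncomputable def sh (l : ℂ) (f : P) : P := f.comp (Polynomial.X + Polynomial.C l)

/-- The action of `∂` on `V`. -/
noncomputable def dV (v : V) : V := (Polynomial.X * v.1, Polynomial.X * v.2)

/-- The `λ`-action of `L_i` on `M_{a,b,c}`:
`L_i ₗ x = cⁱ(∂+aλ+b)x`, `L_i ₗ y = cⁱ(∂+(a+1/2)λ+b)y`, extended by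
`L_i ₗ (f(∂)v) = f(∂+λ) L_i ₗ v`. -/
noncomputable def LM (a b c : ℂ) (i : ℤ) (l : ℂ) (v : V) : V :=
  (Polynomial.C (c ^ i) * sh l v.1 * (Polynomial.X + Polynomial.C (a*l + b)),
   Polynomial.C (c ^ i) * sh l v.2 * (Polynomial.X + Polynomial.C ((a + 1/2)*l + b)))

/-- The `λ`-action of `G_i` on `M_{a,b,c}`:
`G_i ₗ x = cⁱ y`, `G_i ₗ y = cⁱ(∂+2aλ+b)x`. -/
noncomputable def GM (a b c : ℂ) (i : ℤ) (l : ℂ) (v : V) : V :=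
  (Polynomial.C (c ^ i) * sh l v.2 * (Polynomial.X + Polynomial.C (2*a*l + b)),
   Polynomial.C (c ^ i) * sh l v.1)

/-- The `λ`-action of `L_i` on `M'_{a,b,c}`:
`L_i ₗ x = cⁱ(∂+aλ+b)x`, `L_i ₗ y = cⁱ(∂+(a−1/2)λ+b)y`. -/
noncomputable def LM' (a b c : ℂ) (i : ℤ) (l : ℂ) (v : V) : V :=
  (Polynomial.C (c ^ i) * sh l v.1 * (Polynomial.X + Polynomial.C (a*l + b)),
   Polynomial.C (c ^ i) * sh l v.2 * (Polynomial.X + Polynomial.C ((a - 1/2)*l + b)))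

/-- The `λ`-action of `G_i` on `M'_{a,b,c}`:
`G_i ₗ x = cⁱ(∂+(2a−1)λ+b)y`, `G_i ₗ y = cⁱ x`. -/
noncomputable def GM' (a b c : ℂ) (i : ℤ) (l : ℂ) (v : V) : V :=
  (Polynomial.C (c ^ i) * sh l v.2,
   Polynomial.C (c ^ i) * sh l v.1 * (Polynomial.X + Polynomial.C ((2*a - 1)*l + b)))

/-- the actions above make `M_{a,b,c}` a conformal module over the loop
super-Virasoro conformal superalgebra `𝔠𝔩𝔰`: for all `v ∈ V` and all `λ,μ`,
`[L_i ₗ L_j]_{λ+μ} v = (λ−μ)L_{i+j, λ+μ}v` equals `L_i ₗ(L_j ₘ v) − L_j ₘ(L_i ₗ v)`,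
`[L_i ₗ G_j]_{λ+μ} v = ((1/2)λ−μ)G_{i+j, λ+μ}v` equals `L_i ₗ(G_j ₘ v) − G_j ₘ(L_i ₗ v)`,
and `[G_i ₗ G_j]_{λ+μ} v = 2L_{i+j, λ+μ}v` equals `G_i ₗ(G_j ₘ v) + G_j ₘ(G_i ₗ v)`. -/
theorem stmt8 (a b c : ℂ) (hc : c ≠ 0) (i j : ℤ) (l m : ℂ) (v : V) :
    (l - m) • LM a b c (i+j) (l+m) v
        = LM a b c i l (LM a b c j m v) - LM a b c j m (LM a b c i l v)
    ∧ ((1/2)*l - m) • GM a b c (i+j) (l+m) v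
        = LM a b c i l (GM a b c j m v) - GM a b c j m (LM a b c i l v)
    ∧ (2 : ℂ) • LM a b c (i+j) (l+m) v
        = GM a b c i l (GM a b c j m v) + GM a b c j m (GM a b c i l v) := by
  have hz : c ^ (i+j) = c ^ i * c ^ j := zpow_add₀ hc i j
  refine ⟨?_, ?_, ?_⟩ <;>
  · refine Prod.ext ?_ ?_ <;>
    · show (_ : P) = _
      apply Polynomial.funext
      intro r
      simp only [LM, GM, sh, hz, Prod.smul_fst, Prod.smul_snd, Prod.fst_sub, Prod.snd_sub,
        Prod.fst_add, Prod.snd_add, smul_eq_C_mul, eval_comp, eval_mul, eval_add, eval_sub,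
        eval_C, eval_X, eval_ofNat, eval_one]
      ring
end

section
/- Let V = ℂ[∂]x ⊕ ℂ[∂]y with even part ℂ[∂]x and odd part ℂ[∂]y. For a,b ∈ ℂ, c ∈ ℂ*, the actions L_i _λ x = cⁱ(∂+aλ+b)x, L_i _λ y = cⁱ(∂+(a−1/2)λ+b)y, G_i _λ x = cⁱ(∂+(2a−1)λ+b)y, G_i _λ y = cⁱ x define a conformal module structure over the loop super-Virasoro conformal superalgebra 𝔠𝔩𝔰. -/
open Polynomial

/-- the actions `L_i ₗ x = cⁱ(∂+aλ+b)x`, `L_i ₗ y = cⁱ(∂+(a−1/2)λ+b)y`,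
`G_i ₗ x = cⁱ(∂+(2a−1)λ+b)y`, `G_i ₗ y = cⁱx` make `M'_{a,b,c}` a conformal module over
the loop super-Virasoro conformal superalgebra `𝔠𝔩𝔰`. -/
theorem stmt9 (a b c : ℂ) (hc : c ≠ 0) (i j : ℤ) (l m : ℂ) (v : V) :
    (l - m) • LM' a b c (i+j) (l+m) v
        = LM' a b c i l (LM' a b c j m v) - LM' a b c j m (LM' a b c i l v)
    ∧ ((1/2)*l - m) • GM' a b c (i+j) (l+m) v
        = LM' a b c i l (GM' a b c j m v) - GM' a b c j m (LM' a b c i l v)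
    ∧ (2 : ℂ) • LM' a b c (i+j) (l+m) v
        = GM' a b c i l (GM' a b c j m v) + GM' a b c j m (GM' a b c i l v) := by
  have hz : c ^ (i+j) = c ^ i * c ^ j := zpow_add₀ hc i j
  refine ⟨?_, ?_, ?_⟩ <;>
  · apply Prod.ext <;>
    · apply Polynomial.funext
      intro z
      simp only [LM', GM', sh, hz, Prod.smul_fst, Prod.smul_snd, Prod.fst_sub, Prod.snd_sub,
        Prod.fst_add, Prod.snd_add, smul_eq_C_mul, Polynomial.eval_mul, Polynomial.eval_add,
        Polynomial.eval_sub, Polynomial.eval_comp, Polynomial.eval_C, Polynomial.eval_X]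
      ring_nf
end

section
/- The 𝔠𝔩𝔰-module M_{a,b,c} (with actions L_i _λ x = cⁱ(∂+aλ+b)x, L_i _λ y = cⁱ(∂+(a+1/2)λ+b)y, G_i _λ x = cⁱy, G_i _λ y = cⁱ(∂+2aλ+b)x) is irreducible if and only if a ≠ 0. Moreover, when a = 0, the submodule ℂ[∂](∂+b)x ⊕ ℂ[∂]y is the unique nontrivial proper submodule of M_{0,b,c}. -/
open Polynomial

/-- `S` is a `𝔠𝔩𝔰`-submodule of `M_{a,b,c}`: a `ℂ`-subspace closed under `∂` and under all
`λ`-actions of the `L_i` and `G_i`. -/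
def IsSubM (a b c : ℂ) (S : Submodule ℂ V) : Prop :=
  (∀ v ∈ S, dV v ∈ S) ∧
  ∀ (i : ℤ) (l : ℂ), ∀ v ∈ S, LM a b c i l v ∈ S ∧ GM a b c i l v ∈ S

/-- The candidate submodule `ℂ[∂](∂+b)x ⊕ ℂ[∂]y` of `M_{0,b,c}`. -/
noncomputable def NM (b : ℂ) : Submodule ℂ V :=
  Submodule.comap (LinearMap.fst ℂ P P)
    ((Ideal.span {Polynomial.X + Polynomial.C b}).restrictScalars ℂ)

open Polynomial

-- symmetry of hasse derivative coefficients
lemma hD_coeff_symm (f : P) (n k : ℕ) :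
    (hasseDeriv n f).coeff k = (hasseDeriv k f).coeff n := by
  rw [hasseDeriv_coeff, hasseDeriv_coeff, add_comm k n, Nat.choose_symm_add]

lemma sh_eq (l : ℂ) (f : P) (N : ℕ) (hf : f.natDegree ≤ N) :
    sh l f = ∑ k ∈ Finset.range (N + 1), l ^ k • hasseDeriv k f := by
  ext n
  rw [show sh l f = taylor l f from (taylor_apply l f).symm, taylor_coeff]
  rw [Polynomial.eval_eq_sum_range' (n := N + 1)
    (lt_of_le_of_lt ((natDegree_hasseDeriv_le f n).trans (Nat.sub_le _ _)) (Nat.lt_succ_of_le hf)) ]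
  rw [finset_sum_coeff]
  refine Finset.sum_congr rfl fun k _ => ?_
  rw [coeff_smul, hD_coeff_symm, smul_eq_mul, mul_comm]

lemma hD_high (f : P) (k : ℕ) (h : f.natDegree ≤ k) :
    hasseDeriv k f = Polynomial.C (f.coeff k) := by
  ext n
  rw [hasseDeriv_coeff, coeff_C]
  rcases Nat.eq_zero_or_pos n with hn | hn
  · simp [hn]
  · rw [if_neg hn.ne', coeff_eq_zero_of_natDegree_lt (lt_of_le_of_lt h ?_), mul_zero]
    omega

lemma vand_extract {S : Submodule ℂ V} {n : ℕ} {w : ℕ → V}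
    (h : ∀ l : ℂ, ∑ j ∈ Finset.range n, l ^ j • w j ∈ S) : ∀ k < n, w k ∈ S := by
  classical
  intro k hk
  set M : Matrix (Fin n) (Fin n) ℂ := Matrix.vandermonde (fun i => (i : ℂ)) with hM
  have hdet : IsUnit M.det := by
    rw [hM, Matrix.det_vandermonde]
    refine (Finset.prod_ne_zero_iff.mpr fun i _ => Finset.prod_ne_zero_iff.mpr fun j hj => ?_).isUnit
    have hij : (i : ℕ) < (j : ℕ) := Fin.lt_iff_val_lt_val.mp (Finset.mem_Ioi.mp hj)
    have : ((i : ℕ) : ℂ) ≠ ((j : ℕ) : ℂ) := by exact_mod_cast hij.ne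
    exact sub_ne_zero.mpr (Ne.symm this)
  have key : w k = ∑ i : Fin n, (M⁻¹ ⟨k, hk⟩ i) • ∑ j : Fin n, ((i : ℂ)) ^ (j : ℕ) • w j := by
    have : ∀ i : Fin n, (M⁻¹ ⟨k, hk⟩ i) • ∑ j : Fin n, ((i : ℂ)) ^ (j : ℕ) • w j
        = ∑ j : Fin n, (M⁻¹ ⟨k, hk⟩ i * M i j) • w j := by
      intro i
      rw [Finset.smul_sum]
      exact Finset.sum_congr rfl fun j _ => by rw [smul_smul]; rfl
    rw [Finset.sum_congr rfl fun i _ => this i, Finset.sum_comm]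
    have h2 : ∀ j : Fin n, ∑ i : Fin n, (M⁻¹ ⟨k, hk⟩ i * M i j) • w j
        = ((M⁻¹ * M) ⟨k, hk⟩ j) • w j := by
      intro j
      rw [Matrix.mul_apply, Finset.sum_smul]
    rw [Finset.sum_congr rfl fun j _ => h2 j, Matrix.nonsing_inv_mul M hdet]
    simp [Matrix.one_apply]
  rw [key]
  refine Submodule.sum_mem _ fun i _ => Submodule.smul_mem _ _ ?_
  have := h (i : ℂ)
  rwa [Finset.sum_range fun j => ((i : ℂ)) ^ j • w j] at this

noncomputable def pfam (e b : ℂ) (p : P) : ℕ → P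
  | 0 => p * (Polynomial.X + Polynomial.C b)
  | (j+1) => hasseDeriv (j+1) p * (Polynomial.X + Polynomial.C b) + e • hasseDeriv j p

lemma comp_decomp (e b l : ℂ) (p : P) (N : ℕ) (hp : p.natDegree ≤ N) :
    sh l p * (Polynomial.X + Polynomial.C (e * l + b))
      = ∑ j ∈ Finset.range (N + 2), l ^ j • pfam e b p j := by
  have h1 : ∑ j ∈ Finset.range (N + 1),
        l ^ (j + 1) • (hasseDeriv (j + 1) p * (Polynomial.X + Polynomial.C b))
        + l ^ 0 • (hasseDeriv 0 p * (Polynomial.X + Polynomial.C b))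
      = ∑ j ∈ Finset.range (N + 2),
          l ^ j • (hasseDeriv j p * (Polynomial.X + Polynomial.C b)) :=
    (Finset.sum_range_succ' (fun j => l ^ j • (hasseDeriv j p * (Polynomial.X + Polynomial.C b))) (N + 1)).symm
  have h2 : ∑ j ∈ Finset.range (N + 2),
        l ^ j • (hasseDeriv j p * (Polynomial.X + Polynomial.C b))
      = sh l p * (Polynomial.X + Polynomial.C b) := by
    rw [sh_eq l p (N + 1) (hp.trans (Nat.le_succ N)), Finset.sum_mul]
    exact Finset.sum_congr rfl fun j _ => (smul_mul_assoc _ _ _).symm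
  have h3 : ∑ j ∈ Finset.range (N + 1), l ^ (j + 1) • (e • hasseDeriv j p)
      = (e * l) • sh l p := by
    rw [sh_eq l p N hp, Finset.smul_sum]
    refine Finset.sum_congr rfl fun j _ => ?_
    rw [smul_smul, smul_smul, pow_succ]
    ring_nf
  have h4 : sh l p * (Polynomial.X + Polynomial.C (e * l + b))
      = sh l p * (Polynomial.X + Polynomial.C b) + (e * l) • sh l p := by
    rw [map_add, Polynomial.smul_eq_C_mul]
    ring
  rw [Finset.sum_range_succ' (fun j => l ^ j • pfam e b p j) (N + 1)]
  simp only [pfam, smul_add, Finset.sum_add_distrib, hasseDeriv_zero', pow_zero, one_smul] at *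
  rw [h4, ← h2, ← h1, h3]
  abel

lemma sum_pair (s : Finset ℕ) (p q : ℕ → P) :
    (∑ j ∈ s, ((p j, q j) : V)) = (∑ j ∈ s, p j, ∑ j ∈ s, q j) := by
  apply Prod.ext
  · exact map_sum (AddMonoidHom.fst P P) _ s
  · exact map_sum (AddMonoidHom.snd P P) _ s

lemma GM_decomp (a b c : ℂ) (f g : P) (N : ℕ) (hf : f.natDegree ≤ N)
    (hg : g.natDegree ≤ N) (l : ℂ) :
    GM a b c 0 l (f, g)
      = ∑ j ∈ Finset.range (N + 2), l ^ j • ((pfam (2*a) b g j, hasseDeriv j f) : V) := by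
  have hc0 : (Polynomial.C (c ^ (0 : ℤ)) : P) = 1 := by norm_num
  simp only [Prod.smul_mk]
  rw [sum_pair]
  unfold GM
  simp only [hc0, one_mul]
  apply Prod.ext
  · exact comp_decomp (2*a) b l g N hg
  · exact sh_eq l f (N + 1) (hf.trans (Nat.le_succ N))

lemma LM_decomp (a b c : ℂ) (f g : P) (N : ℕ) (hf : f.natDegree ≤ N)
    (hg : g.natDegree ≤ N) (l : ℂ) :
    LM a b c 0 l (f, g)
      = ∑ j ∈ Finset.range (N + 2), l ^ j • ((pfam a b f j, pfam (a + 1/2) b g j) : V) := by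
  have hc0 : (Polynomial.C (c ^ (0 : ℤ)) : P) = 1 := by norm_num
  simp only [Prod.smul_mk]
  rw [sum_pair]
  unfold LM
  simp only [hc0, one_mul]
  apply Prod.ext
  · exact comp_decomp a b l f N hf
  · exact comp_decomp (a + 1/2) b l g N hg

lemma GM_mem {a b c : ℂ} {S : Submodule ℂ V} (hS : IsSubM a b c S) {f g : P}
    (hv : ((f, g) : V) ∈ S) {N : ℕ} (hf : f.natDegree ≤ N) (hg : g.natDegree ≤ N) :
    ∀ j < N + 2, ((pfam (2*a) b g j, hasseDeriv j f) : V) ∈ S := by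
  apply vand_extract
  intro l
  rw [← GM_decomp a b c f g N hf hg l]
  exact (hS.2 0 l _ hv).2

lemma LM_mem {a b c : ℂ} {S : Submodule ℂ V} (hS : IsSubM a b c S) {f g : P}
    (hv : ((f, g) : V) ∈ S) {N : ℕ} (hf : f.natDegree ≤ N) (hg : g.natDegree ≤ N) :
    ∀ j < N + 2, ((pfam a b f j, pfam (a + 1/2) b g j) : V) ∈ S := by
  apply vand_extract
  intro l
  rw [← LM_decomp a b c f g N hf hg l]
  exact (hS.2 0 l _ hv).1

lemma pfam_high (e b : ℂ) (p : P) (k : ℕ) (h : p.natDegree ≤ k) :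
    pfam e b p (k + 1)
      = Polynomial.C (p.coeff (k + 1)) * (Polynomial.X + Polynomial.C b)
        + Polynomial.C (e * p.coeff k) := by
  rw [pfam, hD_high p (k + 1) (h.trans (Nat.le_succ k)), hD_high p k h,
    Polynomial.smul_eq_C_mul, ← Polynomial.C_mul]

lemma gen_span_fst {S : Submodule ℂ V} (hd : ∀ v ∈ S, dV v ∈ S) {p : P}
    (hp : ((p, 0) : V) ∈ S) (q : P) : ((p * q, 0) : V) ∈ S := by
  have hpow : ∀ n : ℕ, ((p * Polynomial.X ^ n, 0) : V) ∈ S := by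
    intro n
    induction n with
    | zero => simpa using hp
    | succ n ih =>
      have := hd _ ih
      simp only [dV] at this
      have he : ((Polynomial.X * (p * Polynomial.X ^ n), Polynomial.X * 0) : V)
          = ((p * Polynomial.X ^ (n+1), 0) : V) := by
        apply Prod.ext
        · show Polynomial.X * (p * Polynomial.X ^ n) = p * Polynomial.X ^ (n+1); ring
        · simp
      rwa [he] at this
  induction q using Polynomial.induction_on' with
  | add f g hf hg => simpa [mul_add] using S.add_mem hf hg
  | monomial n r =>
    have := S.smul_mem r (hpow n)
    have he : r • ((p * Polynomial.X ^ n, 0) : V) = ((p * Polynomial.monomial n r, 0) : V) := by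
      simp [Prod.smul_mk, Polynomial.smul_eq_C_mul, ← Polynomial.C_mul_X_pow_eq_monomial]
      ring
    rwa [he] at this

lemma gen_span_snd {S : Submodule ℂ V} (hd : ∀ v ∈ S, dV v ∈ S) {p : P}
    (hp : ((0, p) : V) ∈ S) (q : P) : ((0, p * q) : V) ∈ S := by
  have hpow : ∀ n : ℕ, ((0, p * Polynomial.X ^ n) : V) ∈ S := by
    intro n
    induction n with
    | zero => simpa using hp
    | succ n ih =>
      have := hd _ ih
      simp only [dV] at this
      have he : ((Polynomial.X * 0, Polynomial.X * (p * Polynomial.X ^ n)) : V)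
          = ((0, p * Polynomial.X ^ (n+1)) : V) := by
        apply Prod.ext
        · simp
        · show Polynomial.X * (p * Polynomial.X ^ n) = p * Polynomial.X ^ (n+1); ring
      rwa [he] at this
  induction q using Polynomial.induction_on' with
  | add f g hf hg => simpa [mul_add] using S.add_mem hf hg
  | monomial n r =>
    have := S.smul_mem r (hpow n)
    have he : r • ((0, p * Polynomial.X ^ n) : V) = ((0, p * Polynomial.monomial n r) : V) := by
      simp [Prod.smul_mk, Polynomial.smul_eq_C_mul, ← Polynomial.C_mul_X_pow_eq_monomial]
      ring
    rwa [he] at this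

lemma from10 {a b c : ℂ} {S : Submodule ℂ V} (hS : IsSubM a b c S)
    (h : ((1, 0) : V) ∈ S) : ((0, 1) : V) ∈ S := by
  have := (hS.2 0 0 _ h).2
  have he : GM a b c 0 0 ((1, 0) : V) = ((0, 1) : V) := by
    unfold GM sh
    apply Prod.ext
    · show Polynomial.C (c ^ (0:ℤ)) * ((0 : P).comp _) * _ = (0 : P)
      simp
    · show Polynomial.C (c ^ (0:ℤ)) * ((1 : P).comp _) = (1 : P)
      simp
  rwa [he] at this

lemma top_of {a b c : ℂ} {S : Submodule ℂ V} (hS : IsSubM a b c S)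
    (h1 : ((1, 0) : V) ∈ S) (h0 : ((0, 1) : V) ∈ S) : S = ⊤ := by
  rw [eq_top_iff]
  rintro ⟨f, g⟩ -
  have hf : ((f, 0) : V) ∈ S := by simpa using gen_span_fst hS.1 h1 f
  have hg : ((0, g) : V) ∈ S := by simpa using gen_span_snd hS.1 h0 g
  simpa using S.add_mem hf hg

lemma from01 {a b c : ℂ} (ha : a ≠ 0) {S : Submodule ℂ V} (hS : IsSubM a b c S)
    (h : ((0, 1) : V) ∈ S) : ((1, 0) : V) ∈ S := by
  have h1 := GM_mem hS h (N := 0) (by simp) (by simp) 1 (by norm_num)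
  have e1 : pfam (2*a) b (1 : P) 1 = Polynomial.C (2*a) := by
    rw [pfam_high (2*a) b 1 0 (by simp)]
    simp [Polynomial.coeff_one]
  have e2 : hasseDeriv 1 (0 : P) = 0 := map_zero _
  rw [e1, e2] at h1
  have h2 := S.smul_mem (2*a)⁻¹ h1
  have ha2 : (2*a) ≠ 0 := by simpa using ha
  have he : (2*a)⁻¹ • ((Polynomial.C (2*a), 0) : V) = ((1, 0) : V) := by
    rw [Prod.smul_mk, smul_zero, Polynomial.smul_C, smul_eq_mul, inv_mul_cancel₀ ha2,
      Polynomial.C_1]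
  rwa [he] at h2

lemma getA {a b c : ℂ} {S : Submodule ℂ V} (hS : IsSubM a b c S) {f g : P}
    (hv : ((f, g) : V) ∈ S) (hf : f ≠ 0)
    (hgf : g = 0 ∨ g.natDegree + 1 < f.natDegree) : ((0, 1) : V) ∈ S := by
  have hgle : g.natDegree ≤ f.natDegree := by
    rcases hgf with h | h
    · simp [h]
    · omega
  have key := GM_mem hS hv (N := f.natDegree) le_rfl hgle f.natDegree (by omega)
  have h2 : hasseDeriv f.natDegree f = Polynomial.C f.leadingCoeff := hD_high f _ le_rfl
  have h1 : pfam (2*a) b g f.natDegree = 0 := by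
    rcases hn : f.natDegree with _ | k
    · have hg0 : g = 0 := by
        rcases hgf with h | h
        · exact h
        · omega
      simp [pfam, hg0]
    · have hgk : g = 0 ∨ g.natDegree < k := by
        rcases hgf with h | h
        · exact Or.inl h
        · right; omega
      have hgk' : g.natDegree ≤ k := by
        rcases hgk with h | h
        · simp [h]
        · omega
      rw [pfam_high (2*a) b g k hgk']
      have c1 : g.coeff (k + 1) = 0 := by
        rcases hgk with h | h
        · simp [h]
        · exact Polynomial.coeff_eq_zero_of_natDegree_lt (by omega)
      have c2 : g.coeff k = 0 := by
        rcases hgk with h | h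
        · simp [h]
        · exact Polynomial.coeff_eq_zero_of_natDegree_lt h
      simp [c1, c2]
  rw [h1, h2] at key
  have h3 := S.smul_mem f.leadingCoeff⁻¹ key
  have hlc : f.leadingCoeff ≠ 0 := Polynomial.leadingCoeff_ne_zero.mpr hf
  have he : f.leadingCoeff⁻¹ • ((0, Polynomial.C f.leadingCoeff) : V) = ((0, 1) : V) := by
    rw [Prod.smul_mk, smul_zero, Polynomial.smul_C, smul_eq_mul, inv_mul_cancel₀ hlc,
      Polynomial.C_1]
  rwa [he] at h3

lemma getConst {a b c : ℂ} {S : Submodule ℂ V} (hS : IsSubM a b c S) {f g : P}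
    (hv : ((f, g) : V) ∈ S) (hfg : f.natDegree ≤ g.natDegree + 1) :
    ((Polynomial.C (2*a*g.leadingCoeff), Polynomial.C (f.coeff (g.natDegree + 1))) : V) ∈ S := by
  have key := GM_mem hS hv (N := g.natDegree + 1) hfg (Nat.le_succ _) (g.natDegree + 1) (by omega)
  have h1 : pfam (2*a) b g (g.natDegree + 1) = Polynomial.C (2*a*g.leadingCoeff) := by
    rw [pfam_high (2*a) b g g.natDegree le_rfl,
      Polynomial.coeff_eq_zero_of_natDegree_lt (Nat.lt_succ_self _), Polynomial.coeff_natDegree]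
    simp
  have h2 : hasseDeriv (g.natDegree + 1) f = Polynomial.C (f.coeff (g.natDegree + 1)) :=
    hD_high f _ hfg
  rwa [h1, h2] at key

lemma mem01_of {S : Submodule ℂ V} {γ : ℂ} (hγ : γ ≠ 0)
    (h : ((0, Polynomial.C γ) : V) ∈ S) : ((0, 1) : V) ∈ S := by
  have h2 := S.smul_mem γ⁻¹ h
  rwa [Prod.smul_mk, smul_zero, Polynomial.smul_C, smul_eq_mul, inv_mul_cancel₀ hγ,
    Polynomial.C_1] at h2

lemma mem10_of {S : Submodule ℂ V} {γ : ℂ} (hγ : γ ≠ 0)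
    (h : ((Polynomial.C γ, 0) : V) ∈ S) : ((1, 0) : V) ∈ S := by
  have h2 := S.smul_mem γ⁻¹ h
  rwa [Prod.smul_mk, smul_zero, Polynomial.smul_C, smul_eq_mul, inv_mul_cancel₀ hγ,
    Polynomial.C_1] at h2

lemma irred {a b c : ℂ} (ha : a ≠ 0) {S : Submodule ℂ V} (hS : IsSubM a b c S)
    (hne : S ≠ ⊥) : S = ⊤ := by
  obtain ⟨⟨f, g⟩, hv, hv0⟩ := (Submodule.ne_bot_iff S).mp hne
  have h01 : ((0, 1) : V) ∈ S := by
    by_cases hg : g = 0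
    · have hf : f ≠ 0 := fun h0 => hv0 (by rw [h0, hg]; rfl)
      exact getA hS hv hf (Or.inl hg)
    · rcases lt_or_ge (g.natDegree + 1) f.natDegree with hlt | hle
      · have hf : f ≠ 0 := by
          intro h0; rw [h0] at hlt; simp at hlt
        exact getA hS hv hf (Or.inr hlt)
      · have hv2 := getConst hS hv hle
        have hα : 2*a*g.leadingCoeff ≠ 0 := by
          have := Polynomial.leadingCoeff_ne_zero.mpr hg
          have h2 : (2:ℂ) * a ≠ 0 := by simpa using ha
          exact mul_ne_zero h2 this
        by_cases hβ : f.coeff (g.natDegree + 1) = 0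
        · have hv2' : ((Polynomial.C (2*a*g.leadingCoeff), 0) : V) ∈ S := by
            rwa [hβ, Polynomial.C_0] at hv2
          exact getA hS hv2' (by simpa using hα) (Or.inl rfl)
        · have hv3 := getConst hS hv2 (by simp only [Polynomial.natDegree_C]; omega)
          rw [Polynomial.leadingCoeff_C, Polynomial.natDegree_C] at hv3
          norm_num [Polynomial.coeff_C] at hv3
          have hβ2 : 2*a*f.coeff (g.natDegree + 1) ≠ 0 := by
            have h2 : (2:ℂ) * a ≠ 0 := by simpa using ha
            exact mul_ne_zero h2 hβ
          have h10 := mem10_of hβ2 (by simpa [mul_assoc] using hv3)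
          exact from10 hS h10
  exact top_of hS (from01 ha hS h01) h01

lemma NM_mem (b : ℂ) (v : V) :
    v ∈ NM b ↔ (Polynomial.X + Polynomial.C b) ∣ v.1 := by
  simp [NM, Submodule.mem_comap, Ideal.mem_span_singleton]

lemma NM_isSub (b c : ℂ) : IsSubM 0 b c (NM b) := by
  constructor
  · intro v hv
    rw [NM_mem] at hv ⊢
    exact hv.mul_left _
  · intro i l v hv
    constructor
    · rw [NM_mem]
      show _ ∣ Polynomial.C (c ^ i) * sh l v.1 * (Polynomial.X + Polynomial.C (0*l + b))
      rw [show (0:ℂ)*l + b = b by ring]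
      exact dvd_mul_left _ _
    · rw [NM_mem]
      show _ ∣ Polynomial.C (c ^ i) * sh l v.2 * (Polynomial.X + Polynomial.C (2*0*l + b))
      rw [show (2:ℂ)*0*l + b = b by ring]
      exact dvd_mul_left _ _

lemma NM_ne_bot (b : ℂ) : NM b ≠ ⊥ := by
  intro h
  have h1 : ((0, 1) : V) ∈ NM b := (NM_mem b _).mpr (dvd_zero _)
  rw [h, Submodule.mem_bot] at h1
  exact one_ne_zero (congrArg Prod.snd h1)

lemma NM_ne_top (b : ℂ) : NM b ≠ ⊤ := by
  intro h
  have h1 : ((1, 0) : V) ∈ NM b := by rw [h]; trivial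
  rw [NM_mem] at h1
  have h2 := Polynomial.natDegree_eq_zero_of_isUnit (isUnit_of_dvd_one h1)
  rw [Polynomial.natDegree_X_add_C] at h2
  exact one_ne_zero h2

lemma unique0 {b c : ℂ} {S : Submodule ℂ V} (hS : IsSubM 0 b c S)
    (hbot : S ≠ ⊥) (htop : S ≠ ⊤) : S = NM b := by
  have h01 : ((0, 1) : V) ∈ S := by
    obtain ⟨⟨f, g⟩, hv, hv0⟩ := (Submodule.ne_bot_iff S).mp hbot
    by_cases hg : g = 0
    · have hf : f ≠ 0 := fun h0 => hv0 (by rw [h0, hg]; rfl)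
      exact getA hS hv hf (Or.inl hg)
    · rcases lt_or_ge (g.natDegree + 1) f.natDegree with hlt | hle
      · have hf : f ≠ 0 := by
          intro h0; rw [h0] at hlt; simp at hlt
        exact getA hS hv hf (Or.inr hlt)
      · have key := LM_mem hS hv (N := g.natDegree + 1) hle (Nat.le_succ _)
          (g.natDegree + 1) (by omega)
        have e1 : pfam 0 b f (g.natDegree + 1)
            = Polynomial.C (f.coeff (g.natDegree + 1)) * (Polynomial.X + Polynomial.C b) := by
          simp only [pfam]
          rw [hD_high f _ hle, zero_smul, add_zero]
        have e2 : pfam (0 + 1/2) b g (g.natDegree + 1) = Polynomial.C (g.leadingCoeff / 2) := by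
          rw [pfam_high (0 + 1/2) b g g.natDegree le_rfl,
            Polynomial.coeff_eq_zero_of_natDegree_lt (Nat.lt_succ_self _),
            Polynomial.coeff_natDegree, Polynomial.C_0, zero_mul, zero_add,
            show (0 + 1/2) * g.leadingCoeff = g.leadingCoeff / 2 by ring]
        rw [e1, e2] at key
        have hγ : g.leadingCoeff / 2 ≠ 0 := by
          have := Polynomial.leadingCoeff_ne_zero.mpr hg
          simpa using this
        by_cases hβ : f.coeff (g.natDegree + 1) = 0
        · have key' : ((0, Polynomial.C (g.leadingCoeff / 2)) : V) ∈ S := by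
            rwa [hβ, Polynomial.C_0, zero_mul] at key
          exact mem01_of hγ key'
        · have hdeg : (Polynomial.C (f.coeff (g.natDegree + 1))
              * (Polynomial.X + Polynomial.C b)).natDegree
              ≤ (Polynomial.C (g.leadingCoeff / 2)).natDegree + 1 := by
            rw [Polynomial.natDegree_C_mul hβ, Polynomial.natDegree_X_add_C,
              Polynomial.natDegree_C]
          have hv3 := getConst hS key hdeg
          rw [Polynomial.natDegree_C] at hv3
          have ec : (Polynomial.C (f.coeff (g.natDegree + 1))
              * (Polynomial.X + Polynomial.C b)).coeff (0 + 1) = f.coeff (g.natDegree + 1) := by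
            simp [Polynomial.coeff_C_mul, Polynomial.coeff_C]
          rw [ec, show (2:ℂ)*0*(Polynomial.C (g.leadingCoeff / 2)).leadingCoeff = 0 by ring,
            Polynomial.C_0] at hv3
          exact mem01_of hβ hv3
  have hXb : ((Polynomial.X + Polynomial.C b, 0) : V) ∈ S := by
    have h := (hS.2 0 0 _ h01).2
    have he : GM 0 b c 0 0 ((0, 1) : V) = ((Polynomial.X + Polynomial.C b, 0) : V) := by
      unfold GM sh
      apply Prod.ext
      · show Polynomial.C (c ^ (0:ℤ)) * ((1:P).comp _) * _ = _
        norm_num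
      · show Polynomial.C (c ^ (0:ℤ)) * ((0:P).comp _) = 0
        simp
    rwa [he] at h
  have hle : NM b ≤ S := by
    rintro ⟨f, g⟩ hm
    rw [NM_mem] at hm
    obtain ⟨q, hq⟩ := hm
    have h1 : ((f, 0) : V) ∈ S := by
      rw [show f = (Polynomial.X + Polynomial.C b) * q from hq]
      exact gen_span_fst hS.1 hXb q
    have h2 : ((0, g) : V) ∈ S := by simpa using gen_span_snd hS.1 h01 g
    simpa using S.add_mem h1 h2
  have hge : S ≤ NM b := by
    by_contra hc
    apply htop
    rw [SetLike.not_le_iff_exists] at hc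
    obtain ⟨⟨f, g⟩, hfS, hfN⟩ := hc
    rw [NM_mem] at hfN
    have h2 : ((0, g) : V) ∈ S := by simpa using gen_span_snd hS.1 h01 g
    have hf0 : ((f, 0) : V) ∈ S := by
      have := S.sub_mem hfS h2
      simpa using this
    set β := f.eval (-b) with hβdef
    have hd : (Polynomial.X + Polynomial.C b) ∣ (f - Polynomial.C β) := by
      rw [show Polynomial.X + Polynomial.C b = Polynomial.X - Polynomial.C (-b) by
        rw [map_neg, sub_neg_eq_add], Polynomial.dvd_iff_isRoot]
      simp [Polynomial.IsRoot, hβdef]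
    obtain ⟨q, hq⟩ := hd
    have h3 : (((Polynomial.X + Polynomial.C b) * q, 0) : V) ∈ S := gen_span_fst hS.1 hXb q
    have h4 : ((Polynomial.C β, 0) : V) ∈ S := by
      have h5 := S.sub_mem hf0 h3
      rw [← hq] at h5
      simpa [sub_sub_cancel] using h5
    have hβ0 : β ≠ 0 := by
      intro h0
      apply hfN
      rw [h0, Polynomial.C_0, sub_zero] at hq
      exact ⟨q, hq⟩
    have h10 := mem10_of hβ0 h4
    exact top_of hS h10 (from10 hS h10)
  exact le_antisymm hge hle


/-- `M_{a,b,c}` is irreducible iff `a ≠ 0`; and when `a = 0`,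
`ℂ[∂](∂+b)x ⊕ ℂ[∂]y` is the unique nontrivial proper submodule of `M_{0,b,c}`. -/
theorem stmt10 (a b c : ℂ) (hc : c ≠ 0) :
    ((∀ S : Submodule ℂ V, IsSubM a b c S → S = ⊥ ∨ S = ⊤) ↔ a ≠ 0)
    ∧ (a = 0 →
        IsSubM 0 b c (NM b) ∧ NM b ≠ ⊥ ∧ NM b ≠ ⊤ ∧
        ∀ S : Submodule ℂ V, IsSubM 0 b c S → S ≠ ⊥ → S ≠ ⊤ → S = NM b) := by
  constructor
  · constructor
    · intro hirr
      by_contra ha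
      subst ha
      rcases hirr (NM b) (NM_isSub b c) with h | h
      · exact NM_ne_bot b h
      · exact NM_ne_top b h
    · intro ha S hS
      by_cases h : S = ⊥
      · exact Or.inl h
      · exact Or.inr (irred ha hS h)
  · intro ha
    exact ⟨NM_isSub b c, NM_ne_bot b, NM_ne_top b, fun S hS h1 h2 => unique0 hS h1 h2⟩
end

section
/- For a,b,α,β ∈ ℂ and c,γ ∈ ℂ*, the 𝔠𝔩𝔰-modules M_{a,b,c} and M_{α,β,γ} are isomorphic if and only if (a,b,c) = (α,β,γ); similarly for M'. Moreover M_{a,b,c} is never isomorphic to M'_{α,β,γ}. -/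
open Polynomial

/-- An isomorphism of conformal `𝔠𝔩𝔰`-modules between the module `V` with actions
`(L₁, G₁)` and the module `V` with actions `(L₂, G₂)`: an even `ℂ[∂]`-module isomorphism
(i.e. a `ℂ`-linear equivalence commuting with `∂` and preserving the parity
decomposition `V = ℂ[∂]x ⊕ ℂ[∂]y`) commuting with all `λ`-actions. -/
def ClsIso (L₁ G₁ L₂ G₂ : ℤ → ℂ → V → V) : Prop :=
  ∃ φ : V ≃ₗ[ℂ] V,
    (∀ v : V, φ (dV v) = dV (φ v)) ∧
    (∀ v : V, v.2 = 0 → (φ v).2 = 0) ∧ (∀ v : V, v.1 = 0 → (φ v).1 = 0) ∧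
    (∀ (i : ℤ) (l : ℂ) (v : V),
      φ (L₁ i l v) = L₂ i l (φ v) ∧ φ (G₁ i l v) = G₂ i l (φ v))

theorem keyPhi (φ : V ≃ₗ[ℂ] V)
    (hd : ∀ v : V, φ (dV v) = dV (φ v))
    (hx : ∀ v : V, v.2 = 0 → (φ v).2 = 0)
    (hy : ∀ v : V, v.1 = 0 → (φ v).1 = 0) :
    ∃ p q : ℂ, p ≠ 0 ∧ q ≠ 0 ∧ ∀ f g : P, φ (f, g) = (f * C p, g * C q) := by
  have h1 : φ ((1 : P), (0 : P)) = ((φ ((1:P),(0:P))).1, 0) :=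
    Prod.ext rfl (hx (1,0) rfl)
  have h2 : φ ((0 : P), (1 : P)) = (0, (φ ((0:P),(1:P))).2) :=
    Prod.ext (hy (0,1) rfl) rfl
  set p' : P := (φ ((1:P),(0:P))).1 with hp'
  set q' : P := (φ ((0:P),(1:P))).2 with hq'
  have S1 : ∀ f : P, φ (f, 0) = (f * p', 0) := by
    intro f
    induction f using Polynomial.induction_on with
    | C k =>
        have e : ((C k : P), (0 : P)) = k • ((1 : P), (0 : P)) := by
          simp [Prod.smul_mk, Polynomial.smul_eq_C_mul]
        rw [e, map_smul, h1]
        simp [Prod.smul_mk, Polynomial.smul_eq_C_mul]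
    | add f g hf hg =>
        have e : ((f + g : P), (0:P)) = ((f, 0) : V) + (g, 0) := by simp
        rw [e, map_add, hf, hg]
        simp [add_mul]
    | monomial n k ih =>
        have e1 : ((C k * X ^ (n+1) : P), (0:P)) = dV (C k * X ^ n, 0) := by
          simp [dV]; ring
        rw [e1, hd, ih]
        simp [dV, Prod.ext_iff]; ring
  have S2 : ∀ g : P, φ (0, g) = (0, g * q') := by
    intro g
    induction g using Polynomial.induction_on with
    | C k =>
        have e : ((0 : P), (C k : P)) = k • ((0 : P), (1 : P)) := by
          simp [Prod.smul_mk, Polynomial.smul_eq_C_mul]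
        rw [e, map_smul, h2]
        simp [Prod.smul_mk, Polynomial.smul_eq_C_mul]
    | add f g hf hg =>
        have e : ((0:P), (f + g : P)) = ((0, f) : V) + (0, g) := by simp
        rw [e, map_add, hf, hg]
        simp [add_mul]
    | monomial n k ih =>
        have e1 : ((0:P), (C k * X ^ (n+1) : P)) = dV (0, C k * X ^ n) := by
          simp [dV]; ring
        rw [e1, hd, ih]
        simp [dV, Prod.ext_iff]; ring
  have hfg : ∀ f g : P, φ (f, g) = (f * p', g * q') := by
    intro f g
    have e : ((f, g) : V) = ((f, 0) : V) + (0, g) := by simp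
    rw [e, map_add, S1, S2]
    simp
  obtain ⟨w, hw⟩ := φ.surjective ((1:P), (0:P))
  have hw' : (w.1 * p', w.2 * q') = ((1:P), 0) := by
    rw [← hfg]; simpa using hw
  have hup : IsUnit p' := IsUnit.of_mul_eq_one _
    (by rw [mul_comm]; exact (Prod.ext_iff.mp hw').1)
  obtain ⟨w2, hw2⟩ := φ.surjective ((0:P), (1:P))
  have hw2' : (w2.1 * p', w2.2 * q') = ((0:P), 1) := by
    rw [← hfg]; simpa using hw2
  have huq : IsUnit q' := IsUnit.of_mul_eq_one _
    (by rw [mul_comm]; exact (Prod.ext_iff.mp hw2').2)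
  obtain ⟨r, hru, hrc⟩ := Polynomial.isUnit_iff.mp hup
  obtain ⟨s, hsu, hsc⟩ := Polynomial.isUnit_iff.mp huq
  exact ⟨r, s, hru.ne_zero, hsu.ne_zero, fun f g => by rw [hfg, hrc, hsc]⟩

/-- `M_{a,b,c} ≅ M_{α,β,γ}` iff `(a,b,c) = (α,β,γ)`, similarly for `M'`,
and `M_{a,b,c}` is never isomorphic to `M'_{α,β,γ}`. -/
theorem stmt12 (a b α β : ℂ) (c γ : ℂ) (hc : c ≠ 0) (hγ : γ ≠ 0) :
    (ClsIso (LM a b c) (GM a b c) (LM α β γ) (GM α β γ) ↔ (a, b, c) = (α, β, γ))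
    ∧ (ClsIso (LM' a b c) (GM' a b c) (LM' α β γ) (GM' α β γ) ↔ (a, b, c) = (α, β, γ))
    ∧ ¬ ClsIso (LM a b c) (GM a b c) (LM' α β γ) (GM' α β γ) := by
  refine ⟨⟨?_, ?_⟩, ⟨?_, ?_⟩, ?_⟩
  · rintro ⟨φ, hd, hx, hy, hcom⟩
    obtain ⟨p, q, hp, hq, hφ⟩ := keyPhi φ hd hx hy
    -- G equation on (1,0): C(c^i) * C q = C(γ^i) * C p
    have hG : ∀ (i : ℤ), c ^ i * q = γ ^ i * p := by
      intro i
      have h := (hcom i 0 ((1:P), (0:P))).2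
      simp [GM, sh, hφ] at h
      have h0 := congrArg (fun r : P => r.coeff 0) h
      simpa [mul_coeff_zero, coeff_C_zero] using h0
    have hqp : q = p := by have := hG 0; simpa using this
    have hcγ : c = γ := by
      have := hG 1; rw [hqp] at this
      simp at this
      exact this.resolve_right hp
    -- L equation on (1,0): gives a*l+b = α*l+β
    have hL : ∀ l : ℂ, a * l + b = α * l + β := by
      intro l
      have h := (hcom 0 l ((1:P), (0:P))).1
      simp [LM, sh, hφ] at h
      have h0 := congrArg (fun r : P => r.coeff 0) h
      simp [mul_coeff_zero, coeff_C_zero] at h0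
      exact mul_right_cancel₀ hp (by linear_combination h0)
    have hb : b = β := by simpa using hL 0
    have ha : a = α := by have := hL 1; simp [hb] at this; linear_combination this
    simp [ha, hb, hcγ]
  · rintro h
    simp only [Prod.mk.injEq] at h
    obtain ⟨rfl, rfl, rfl⟩ := h
    exact ⟨LinearEquiv.refl ℂ V, fun v => rfl, fun v h => h, fun v h => h,
      fun i l v => ⟨rfl, rfl⟩⟩
  · rintro ⟨φ, hd, hx, hy, hcom⟩
    obtain ⟨p, q, hp, hq, hφ⟩ := keyPhi φ hd hx hy
    have hG : ∀ (i : ℤ), c ^ i * p = γ ^ i * q := by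
      intro i
      have h := (hcom i 0 ((0:P), (1:P))).2
      simp [GM', sh, hφ] at h
      have h0 := congrArg (fun r : P => r.coeff 0) h
      simpa [mul_coeff_zero, coeff_C_zero] using h0
    have hqp : p = q := by have := hG 0; simpa using this
    have hcγ : c = γ := by
      have := hG 1; rw [hqp] at this
      simp at this
      exact this.resolve_right hq
    have hL : ∀ l : ℂ, a * l + b = α * l + β := by
      intro l
      have h := (hcom 0 l ((1:P), (0:P))).1
      simp [LM', sh, hφ] at h
      have h0 := congrArg (fun r : P => r.coeff 0) h
      simp [mul_coeff_zero, coeff_C_zero] at h0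
      exact mul_right_cancel₀ hp (by linear_combination h0)
    have hb : b = β := by simpa using hL 0
    have ha : a = α := by have := hL 1; simp [hb] at this; linear_combination this
    simp [ha, hb, hcγ]
  · rintro h
    simp only [Prod.mk.injEq] at h
    obtain ⟨rfl, rfl, rfl⟩ := h
    exact ⟨LinearEquiv.refl ℂ V, fun v => rfl, fun v h => h, fun v h => h,
      fun i l v => ⟨rfl, rfl⟩⟩
  · rintro ⟨φ, hd, hx, hy, hcom⟩
    obtain ⟨p, q, hp, hq, hφ⟩ := keyPhi φ hd hx hy
    have h := (hcom 0 0 ((1:P), (0:P))).2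
    simp [GM, GM', sh, hφ] at h
    have h1 := congrArg (fun r : P => r.coeff 1) h
    simp only [coeff_C, mul_add, coeff_add, mul_coeff_zero] at h1
    simp [coeff_C_mul, coeff_X] at h1
    exact hp h1.symm
end

section
/- Every nontrivial free conformal module of rank two over the loop super-Virasoro conformal superalgebra 𝔠𝔩𝔰, with even part ℂ[∂]x and odd part ℂ[∂]y each free of rank one, is isomorphic to M_{a,b,c} or to M'_{a,b,c} for some a,b ∈ ℂ and c ∈ ℂ*. -/
open Polynomial

/-- `(LA, GA)` is a conformal module structure of the loop super-Virasoro conformal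
superalgebra `𝔠𝔩𝔰` on the free rank-two `ℂ[∂]`-module `V = ℂ[∂]x ⊕ ℂ[∂]y`, with even
part `ℂ[∂]x` and odd part `ℂ[∂]y`: the `λ`-actions are `ℂ`-linear, polynomial in `λ`,
compatible with `∂`, parity-respecting, and satisfy the conformal Jacobi identities
coming from `[L_i ₗ L_j] = (∂+2λ)L_{i+j}`, `[L_i ₗ G_j] = (∂+(3/2)λ)G_{i+j}`,
`[G_i ₗ G_j] = 2L_{i+j}`. -/
def IsClsModule (LA GA : ℤ → ℂ → V →ₗ[ℂ] V) : Prop :=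
  (∀ (i : ℤ) (l : ℂ) (v : V),
      LA i l (dV v) = dV (LA i l v) + l • LA i l v
    ∧ GA i l (dV v) = dV (GA i l v) + l • GA i l v) ∧
  (∀ (i : ℤ) (l : ℂ) (v : V),
      (v.2 = 0 → (LA i l v).2 = 0 ∧ (GA i l v).1 = 0)
    ∧ (v.1 = 0 → (LA i l v).1 = 0 ∧ (GA i l v).2 = 0)) ∧
  (∀ (i : ℤ) (v : V), ∃ (N : ℕ) (w u : ℕ → V), ∀ l : ℂ,
      LA i l v = ∑ k ∈ Finset.range N, l ^ k • w k
    ∧ GA i l v = ∑ k ∈ Finset.range N, l ^ k • u k) ∧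
  (∀ (i j : ℤ) (l m : ℂ) (v : V),
      (l - m) • LA (i+j) (l+m) v = LA i l (LA j m v) - LA j m (LA i l v)
    ∧ ((1/2)*l - m) • GA (i+j) (l+m) v = LA i l (GA j m v) - GA j m (LA i l v)
    ∧ (2 : ℂ) • LA (i+j) (l+m) v = GA i l (GA j m v) + GA j m (GA i l v))


namespace ClsAux
open Polynomial

@[simp] lemma sh_one (l : ℂ) : sh l (1:P) = 1 := by simp [sh]
@[simp] lemma sh_C (l a : ℂ) : sh l (C a) = C a := by simp [sh]
@[simp] lemma sh_X (l : ℂ) : sh l (X:P) = X + C l := by simp [sh]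
@[simp] lemma sh_zero (l : ℂ) : sh l (0:P) = 0 := by simp [sh]
lemma sh_mul (l : ℂ) (f g : P) : sh l (f*g) = sh l f * sh l g := by simp [sh, mul_comp]
lemma sh_add (l : ℂ) (f g : P) : sh l (f+g) = sh l f + sh l g := by simp [sh, add_comp]
@[simp] lemma sh_zero' (f : P) : sh 0 f = f := by simp [sh]
lemma sh_eq_taylor (l : ℂ) (f : P) : sh l f = Polynomial.taylor l f := by
  rw [sh, taylor_apply]

lemma natDegree_sh (l : ℂ) (f : P) : (sh l f).natDegree = f.natDegree := by
  rw [sh, natDegree_comp, natDegree_X_add_C, mul_one]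

lemma sh_coeff_top {f : P} {n : ℕ} (h : f.natDegree ≤ n) (l : ℂ) :
    (sh l f).coeff n = f.coeff n := by
  rw [sh_eq_taylor, taylor_coeff]
  have hh : hasseDeriv n f = C (f.coeff n) := by
    ext k
    rw [hasseDeriv_coeff, coeff_C]
    rcases Nat.eq_zero_or_pos k with hk | hk
    · simp [hk]
    · have h0 : f.coeff (k + n) = 0 := coeff_eq_zero_of_natDegree_lt (by omega)
      rw [h0, if_neg (by omega)]; ring
  simp [hh]

lemma sh_coeff_pred {f : P} {n : ℕ} (h : f.natDegree ≤ n + 1) (l : ℂ) :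
    (sh l f).coeff n = f.coeff n + (n+1 : ℂ) * l * f.coeff (n+1) := by
  rw [sh_eq_taylor, taylor_coeff]
  have hh : hasseDeriv n f = C (f.coeff n) + C ((n+1 : ℂ) * f.coeff (n+1)) * X := by
    ext k
    rw [hasseDeriv_coeff]
    match k with
    | 0 => simp
    | 1 =>
      rw [Nat.add_comm 1 n, Nat.choose_succ_self_right]
      simp [coeff_C, coeff_C_mul, coeff_X]
    | (k+2) =>
      have h0 : f.coeff (k + 2 + n) = 0 := coeff_eq_zero_of_natDegree_lt (by omega)
      simp [h0, coeff_C, coeff_C_mul, coeff_X, coeff_one]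
  rw [hh]; simp; ring

lemma sh_eq_zero_iff {l : ℂ} {f : P} : sh l f = 0 ↔ f = 0 := by
  rw [sh_eq_taylor]
  constructor
  · intro h
    have := taylor_injective (R := ℂ) l (a₁ := f) (a₂ := 0)
    simp only [map_zero] at this
    exact this h
  · rintro rfl; simp

/-- coefficient of product of two polynomials of degree ≤ n+1 at 2n+1 -/
lemma coeff_mul_near_top {f g : P} {n : ℕ} (hf : f.natDegree ≤ n+1) (hg : g.natDegree ≤ n+1) :
    (f*g).coeff (2*n+1) = f.coeff (n+1) * g.coeff n + f.coeff n * g.coeff (n+1) := by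
  rw [coeff_mul]
  have hsub : ({((n+1 : ℕ), n), (n, n+1)} : Finset (ℕ × ℕ)) ⊆ Finset.HasAntidiagonal.antidiagonal (2*n+1) := by
    intro x hx
    simp only [Finset.mem_insert, Finset.mem_singleton] at hx
    rcases hx with rfl | rfl <;> simp [Finset.mem_antidiagonal] <;> omega
  rw [← Finset.sum_subset hsub]
  · rw [Finset.sum_pair (by simp)]
  · intro x hx hnx
    simp only [Finset.HasAntidiagonal.mem_antidiagonal] at hx
    simp only [Finset.mem_insert, Finset.mem_singleton] at hnx
    rcases Nat.lt_or_ge x.1 n with h1 | h1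
    · have : g.coeff x.2 = 0 := coeff_eq_zero_of_natDegree_lt (by omega)
      simp [this]
    · rcases Nat.lt_or_ge (n+1) x.1 with h2 | h2
      · have : f.coeff x.1 = 0 := coeff_eq_zero_of_natDegree_lt (by omega)
        simp [this]
      · exfalso
        have : x.1 = n ∨ x.1 = n + 1 := by omega
        rcases this with h | h
        · exact hnx (by right; ext <;> simp [h] <;> omega)
        · exact hnx (by left; ext <;> simp [h] <;> omega)

lemma coeff_mul_linear_succ (f : P) (α : ℂ) (n : ℕ) (h : f.natDegree ≤ n+1) :
    (f * (X + C α)).coeff (n+1) = f.coeff n + α * f.coeff (n+1) := by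
  rw [mul_add, coeff_add, coeff_mul_X, mul_comm f (C α), coeff_C_mul]

lemma coeff_mul_linear_zero (f : P) (α : ℂ) :
    (f * (X + C α)).coeff 0 = α * f.coeff 0 := by
  rw [mul_coeff_zero]
  simp
  ring

/-- scalar polynomial function -/
def PFs (h : ℂ → ℂ) : Prop := ∃ H : P, ∀ l, h l = H.eval l

/-- `P`-valued polynomial function -/
def PF (h : ℂ → P) : Prop :=
  ∃ (N : ℕ) (c : ℕ → P), ∀ l, h l = ∑ k ∈ Finset.range N, l ^ k • c k

lemma PFs.add {h g : ℂ → ℂ} (hh : PFs h) (hg : PFs g) : PFs (fun l => h l + g l) := by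
  obtain ⟨H, hH⟩ := hh; obtain ⟨G, hG⟩ := hg
  exact ⟨H + G, fun l => by simp [hH, hG]⟩

lemma PFs.neg {h : ℂ → ℂ} (hh : PFs h) : PFs (fun l => - h l) := by
  obtain ⟨H, hH⟩ := hh
  exact ⟨-H, fun l => by simp [hH]⟩

lemma PFs.sub {h g : ℂ → ℂ} (hh : PFs h) (hg : PFs g) : PFs (fun l => h l - g l) := by
  obtain ⟨H, hH⟩ := hh; obtain ⟨G, hG⟩ := hg
  exact ⟨H - G, fun l => by simp [hH, hG]⟩

lemma PFs.mul {h g : ℂ → ℂ} (hh : PFs h) (hg : PFs g) : PFs (fun l => h l * g l) := by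
  obtain ⟨H, hH⟩ := hh; obtain ⟨G, hG⟩ := hg
  exact ⟨H * G, fun l => by simp [hH, hG]⟩

lemma PFs.const (a : ℂ) : PFs (fun _ => a) := ⟨C a, fun l => by simp⟩

lemma PFs.id : PFs (fun l => l) := ⟨X, fun l => by simp⟩

lemma PFs.linear (a b : ℂ) : PFs (fun l => a * l + b) :=
  ((PFs.const a).mul PFs.id).add (PFs.const b)

lemma PFs.shift {h : ℂ → ℂ} (hh : PFs h) (m : ℂ) : PFs (fun l => h (m + l)) := by
  obtain ⟨H, hH⟩ := hh
  refine ⟨H.comp (C m + X), fun l => ?_⟩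
  show h (m + l) = _
  rw [hH, eval_comp]; simp

/-- a scalar polynomial function vanishing on an infinite set vanishes identically -/
lemma PFs.eq_zero_of_infinite {h : ℂ → ℂ} (hh : PFs h)
    (hinf : {l : ℂ | h l = 0}.Infinite) : ∀ l, h l = 0 := by
  obtain ⟨H, hH⟩ := hh
  have : H = 0 := by
    apply eq_zero_of_infinite_isRoot
    apply hinf.mono
    intro l hl
    simp only [Set.mem_setOf_eq, IsRoot.def]
    rw [← hH]; exact hl
  intro l; rw [hH, this, eval_zero]

lemma PFs.finite_zeros {h : ℂ → ℂ} (hh : PFs h) {l₀ : ℂ} (h0 : h l₀ ≠ 0) :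
    {l : ℂ | h l = 0}.Finite := by
  by_contra hc
  exact h0 (hh.eq_zero_of_infinite hc l₀)

lemma PF.coeff {h : ℂ → P} (hh : PF h) (j : ℕ) : PFs (fun l => (h l).coeff j) := by
  obtain ⟨N, c, hc⟩ := hh
  refine ⟨∑ k ∈ Finset.range N, C ((c k).coeff j) * X ^ k, fun l => ?_⟩
  show (h l).coeff j = _
  rw [hc, finset_sum_coeff, eval_finset_sum]
  congr 1; ext k
  rw [coeff_smul, smul_eq_mul, eval_mul, eval_C, eval_pow, eval_X]
  ring

lemma PF.eq_zero_of_infinite {h : ℂ → P} (hh : PF h)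
    (hinf : {l : ℂ | h l = 0}.Infinite) : ∀ l, h l = 0 := by
  intro l
  ext j
  rw [coeff_zero]
  refine (hh.coeff j).eq_zero_of_infinite ?_ l
  apply hinf.mono
  intro x hx
  simp only [Set.mem_setOf_eq] at hx ⊢
  rw [hx, coeff_zero]

lemma PF.finite_zeros {h : ℂ → P} (hh : PF h) {l₀ : ℂ} (h0 : h l₀ ≠ 0) :
    {l : ℂ | h l = 0}.Finite := by
  by_contra hc
  exact h0 (hh.eq_zero_of_infinite hc l₀)

lemma PF.natDegree_bound {h : ℂ → P} (hh : PF h) : ∃ D, ∀ l, (h l).natDegree ≤ D := by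
  obtain ⟨N, c, hc⟩ := hh
  refine ⟨(Finset.range N).sup (fun k => (c k).natDegree), fun l => ?_⟩
  rw [hc]
  refine natDegree_sum_le_of_forall_le _ _ fun k hk => ?_
  exact (natDegree_smul_le _ _).trans (Finset.le_sup (f := fun k => (c k).natDegree) hk)

/-- pick a point outside a finite subset of ℂ. -/
lemma exists_notin {F : Set ℂ} (hF : F.Finite) : ∃ l, l ∉ F :=
  hF.infinite_compl.nonempty

lemma exists_notin₂ {F F' : Set ℂ} (hF : F.Finite) (hF' : F'.Finite) :
    ∃ l, l ∉ F ∧ l ∉ F' := by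
  obtain ⟨l, hl⟩ := exists_notin (hF.union hF')
  exact ⟨l, fun h => hl (Or.inl h), fun h => hl (Or.inr h)⟩

/-- two distinct points avoiding a finite set -/
lemma exists_pair_notin {F : Set ℂ} (hF : F.Finite) : ∃ l m, l ≠ m ∧ l ∉ F ∧ m ∉ F := by
  obtain ⟨l, hl⟩ := exists_notin hF
  obtain ⟨m, hm, hm'⟩ := exists_notin₂ hF (Set.finite_singleton l)
  exact ⟨l, m, fun h => hm' (by simp [h.symm]), hl, hm⟩

/-- multiplicative ≅ zpow classification -/
lemma zpow_of_multiplicative (κ : ℤ → ℂ) (h0 : κ 0 = 1)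
    (hm : ∀ i j, κ (i + j) = κ i * κ j) : κ 1 ≠ 0 ∧ ∀ i, κ i = (κ 1) ^ i := by
  have hne : κ 1 ≠ 0 := by
    intro h
    have h1 := hm 1 (-1)
    norm_num at h1
    rw [h0, h, zero_mul] at h1
    exact one_ne_zero h1
  refine ⟨hne, fun i => ?_⟩
  induction i using Int.induction_on with
  | zero => simp [h0]
  | succ n ih =>
      have := hm n 1
      rw [this, ih, zpow_add_one₀ hne]
  | pred n ih =>
      have := hm (-n - 1) 1
      simp only [sub_add_cancel] at this
      have h2 : κ (-↑n - 1) * κ 1 = κ 1 ^ (-(n:ℤ)) := by rw [← this, ih]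
      rw [zpow_sub_one₀ hne]
      field_simp at h2 ⊢
      linear_combination h2

lemma PFs.ext_of_cofinite {h g : ℂ → ℂ} (hh : PFs h) (hg : PFs g) {F : Set ℂ}
    (hF : F.Finite) (heq : ∀ l ∉ F, h l = g l) : ∀ l, h l = g l := by
  have hsub : PFs (fun l => h l - g l) := hh.sub hg
  refine fun l => sub_eq_zero.mp (hsub.eq_zero_of_infinite (hF.infinite_compl.mono ?_) l)
  intro x hx
  simp only [Set.mem_compl_iff] at hx
  simp only [Set.mem_setOf_eq]
  rw [heq x hx, sub_self]

/-- if `sh l g = g + C l` for all `l` in an infinite set then `g = X + C b`. -/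
lemma shift_eq_add_const {g : P} {S : Set ℂ} (hS : S.Infinite)
    (h : ∀ l ∈ S, sh l g = g + C l) : ∃ b, g = X + C b := by
  obtain ⟨l, hlS, hl0⟩ : ∃ l, l ∈ S ∧ l ≠ 0 := by
    have h' : (S \ {0}).Infinite := hS.diff (Set.finite_singleton 0)
    obtain ⟨l, hl⟩ := h'.nonempty
    exact ⟨l, hl.1, by simpa using hl.2⟩
  have hle : g.natDegree ≤ 1 := by
    by_contra hgt
    push_neg at hgt
    obtain ⟨k, hk⟩ : ∃ k, g.natDegree = k + 2 := ⟨g.natDegree - 2, by omega⟩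
    have h2 : (sh l g).coeff (k+1) = g.coeff (k+1) + (k+2:ℂ) * l * g.coeff (k+2) := by
      have := sh_coeff_pred (f := g) (n := k+1) (by omega) l
      convert this using 3 <;> push_cast <;> ring
    rw [h l hlS] at h2
    rw [coeff_add, coeff_C, if_neg (by omega)] at h2
    have hz : ((k:ℂ)+2) * l * g.coeff (k+2) = 0 := by linear_combination -h2
    have hco : g.coeff (k+2) ≠ 0 := by
      rw [← hk]; exact leadingCoeff_ne_zero.mpr (fun hg0 => by simp [hg0] at hk)
    have hkc : (k:ℂ) + 2 ≠ 0 := by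
      have h' := Nat.cast_ne_zero (R := ℂ) (n := k+2) |>.mpr (by omega)
      push_cast at h'
      exact h'
    exact (mul_ne_zero (mul_ne_zero hkc hl0) hco) hz
  have hform := eq_X_add_C_of_natDegree_le_one hle
  have heq := h l hlS
  rw [hform] at heq
  have hsh : sh l (C (g.coeff 1) * X + C (g.coeff 0))
      = C (g.coeff 1) * X + C (g.coeff 1 * l + g.coeff 0) := by
    rw [sh_add, sh_mul, sh_C, sh_X, sh_C]
    simp only [map_add, map_mul]
    ring
  rw [hsh] at heq
  have h0 := congrArg (fun q => Polynomial.coeff q 0) heq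
  simp only [coeff_add, coeff_C_mul, coeff_X_zero, coeff_C] at h0
  norm_num at h0
  have hg1 : g.coeff 1 = 1 := mul_right_cancel₀ hl0 (by linear_combination h0)
  refine ⟨g.coeff 0, ?_⟩
  conv_lhs => rw [hform]
  rw [hg1, map_one, one_mul]

/-- `(l-m)γ(l+m) = lγ(l) - mγ(m)` for all `l m` forces `γ` affine. -/
lemma affine_of_funeq {γ : ℂ → ℂ} (hγ : PFs γ)
    (heq : ∀ l m, (l - m) * γ (l+m) = l * γ l - m * γ m) :
    ∃ a, ∀ l, γ l = a * l + γ 0 := by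
  obtain ⟨E, hE⟩ := hγ
  have hpoly : (X - C 1) * (sh 1 E) = X * E - C (γ 1) := by
    apply Polynomial.funext
    intro r
    have h1 := heq r 1
    simp only [eval_mul, eval_sub, eval_X, eval_C, eval_one]
    rw [sh, eval_comp]
    simp only [eval_add, eval_X, eval_C]
    simp only [← hE]
    linear_combination h1
  have hdle : E.natDegree ≤ 1 := by
    by_contra hgt
    push_neg at hgt
    obtain ⟨k, hk⟩ : ∃ k, E.natDegree = k + 2 := ⟨E.natDegree - 2, by omega⟩
    have hc := congrArg (fun q => Polynomial.coeff q (k+2)) hpoly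
    simp only [sub_mul, mul_comm X (sh 1 E), mul_comm X E] at hc
    simp only [coeff_sub, coeff_mul_X, coeff_C_mul, coeff_C, if_neg (by omega : ¬ (k+2) = 0)] at hc
    rw [sh_coeff_pred (f := E) (n := k+1) (by omega), sh_coeff_top (f := E) (n := k+2) (by omega),
      one_mul] at hc
    -- hc : E.coeff (k+1) + (k+2)*1*E.coeff (k+2) - E.coeff (k+2) = E.coeff (k+1) - 0
    have hz : ((k:ℂ)+1) * E.coeff (k+2) = 0 := by push_cast at hc ⊢; linear_combination hc
    have hco : E.coeff (k+2) ≠ 0 := by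
      rw [← hk]; exact leadingCoeff_ne_zero.mpr
        (fun hg0 => by simp [hg0] at hk)
    have hkc : (k:ℂ) + 1 ≠ 0 := by
      have h' := Nat.cast_ne_zero (R := ℂ) (n := k+1) |>.mpr (by omega)
      push_cast at h'
      exact h'
    exact (mul_ne_zero hkc hco) hz
  refine ⟨E.coeff 1, fun l => ?_⟩
  have hf := eq_X_add_C_of_natDegree_le_one hdle
  rw [hE l, hE 0]
  conv_lhs => rw [hf]
  conv_rhs => rw [hf]
  simp

/-- a polynomial function with `γ(l+m) = γ(l)γ(m)` and `γ 0 = 1` is constant 1. -/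
lemma one_of_multiplicative {γ : ℂ → ℂ} (hγ : PFs γ) (h0 : γ 0 = 1)
    (hm : ∀ l m, γ (l+m) = γ l * γ m) : ∀ l, γ l = 1 := by
  have hnz : ∀ l, γ l ≠ 0 := by
    intro l hl
    have := hm l (-l)
    rw [add_neg_cancel, h0, hl, zero_mul] at this
    exact one_ne_zero this
  obtain ⟨H, hH⟩ := hγ
  have hdeg : H.degree = 0 := by
    by_contra hd
    obtain ⟨z, hz⟩ := IsAlgClosed.exists_root H hd
    exact hnz z (by rw [hH]; exact hz)
  intro l
  have := eq_C_of_degree_le_zero (le_of_eq hdeg)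
  rw [hH, this, eval_C]
  have h0' := h0
  rw [hH, this, eval_C] at h0'
  exact h0'

lemma sh_linear (l a b : ℂ) : sh l (C a * X + C b) = C a * X + C (a*l + b) := by
  rw [sh_add, sh_mul, sh_C, sh_X, sh_C]
  simp only [map_add, map_mul]
  ring

lemma sh_linX (l β : ℂ) : sh l (X + C β) = X + C (l + β) := by
  rw [sh_add, sh_X, sh_C, map_add]
  ring

lemma sh_pow (l : ℂ) (f : P) (n : ℕ) : sh l (f ^ n) = (sh l f) ^ n := by
  simp [sh, pow_comp]

lemma sh_smul (l a : ℂ) (f : P) : sh l (a • f) = a • sh l f := by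
  rw [smul_eq_C_mul, smul_eq_C_mul, sh_mul, sh_C]

/-- a ℂ-linear endo of `ℂ[X]` with `T(Xf)=(X+l)Tf` is `f ↦ f(X+l)·T1`. -/
lemma linmap_shift (T : P →ₗ[ℂ] P) (l : ℂ)
    (h : ∀ f, T (X * f) = (X + C l) * T f) :
    ∀ f, T f = sh l f * T 1 := by
  have hpow : ∀ n : ℕ, T (X ^ n) = (X + C l) ^ n * T 1 := by
    intro n; induction n with
    | zero => simp
    | succ n ih =>
        rw [pow_succ, mul_comm (X ^ n) X, h, ih, pow_succ]
        ring
  intro f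
  induction f using Polynomial.induction_on' with
  | add p q hp hq => rw [map_add, hp, hq, sh_add]; ring
  | monomial n a =>
      rw [← C_mul_X_pow_eq_monomial, ← smul_eq_C_mul, map_smul, hpow, sh_smul, sh_pow, sh_X,
        smul_eq_C_mul, smul_eq_C_mul]
      ring

/-- existence of maximal relevant coefficient index of a `P`-valued polynomial family -/
lemma top_index {h : ℂ → P} (hPF : PF h) (hne : ∃ l, h l ≠ 0) :
    ∃ n : ℕ, (∀ l, (h l).natDegree ≤ n) ∧ (∃ l, (h l).coeff n ≠ 0) := by
  classical
  obtain ⟨D, hD⟩ := hPF.natDegree_bound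
  obtain ⟨l₁, hl₁⟩ := hne
  set Q : ℕ → Prop := fun j => ∃ l, (h l).coeff j ≠ 0 with hQdef
  have hQl : Q ((h l₁).natDegree) := ⟨l₁, leadingCoeff_ne_zero.mpr hl₁⟩
  have hDl : (h l₁).natDegree ≤ D := hD l₁
  refine ⟨Nat.findGreatest Q D, ?_, Nat.findGreatest_spec hDl hQl⟩
  intro l
  rw [natDegree_le_iff_coeff_eq_zero]
  intro N hN
  by_contra hc
  rcases le_or_gt N D with hND | hND
  · exact (Nat.findGreatest_is_greatest hN hND) ⟨l, hc⟩
  · exact hc (coeff_eq_zero_of_natDegree_lt (lt_of_le_of_lt (hD l) hND))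

lemma nat_cast_add_two_ne (k : ℕ) : (k:ℂ) + 2 ≠ 0 := by
  have h' := Nat.cast_ne_zero (R := ℂ) (n := k+2) |>.mpr (by omega)
  push_cast at h'
  exact h'

lemma nat_cast_add_one_ne (k : ℕ) : (k:ℂ) + 1 ≠ 0 := by
  have h' := Nat.cast_ne_zero (R := ℂ) (n := k+1) |>.mpr (by omega)
  push_cast at h'
  exact h'

section Phase1

variable {p : ℤ → ℂ → P}
variable (hPF : ∀ i, PF (p i))
variable (hE : ∀ i j l m, C (l - m) * p (i+j) (l+m) = sh l (p j m) * p i l - sh m (p i l) * p j m)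

include hPF hE

lemma vir_p00 (hnz : ∃ i l, p i l ≠ 0) : ∃ b, p 0 0 = X + C b := by
  obtain ⟨i₀, l₀, h0⟩ := hnz
  have hfin := (hPF i₀).finite_zeros h0
  apply shift_eq_add_const (S := {l : ℂ | p i₀ l = 0}ᶜ) hfin.infinite_compl
  intro l hl
  have h1 := hE i₀ 0 l 0
  rw [add_zero, add_zero, sub_zero, sh_zero'] at h1
  have h2 : (sh l (p 0 0) - p 0 0 - C l) * p i₀ l = 0 := by linear_combination -h1
  rcases mul_eq_zero.mp h2 with h3 | h3
  · linear_combination h3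
  · exact absurd h3 hl

lemma vir_p0 (hnz : ∃ i l, p i l ≠ 0) :
    ∃ a b, ∀ l, p 0 l = X + C (a * l + b) := by
  obtain ⟨b, hb⟩ := vir_p00 hPF hE hnz
  have hne0 : ∃ l, p 0 l ≠ 0 := ⟨0, by rw [hb]; exact X_add_C_ne_zero b⟩
  obtain ⟨n, hdeg, hQn⟩ := top_index (hPF 0) hne0
  have hn1 : 1 ≤ n := by
    have h' := hdeg 0
    rw [hb, natDegree_X_add_C] at h'
    exact h'
  have hn2 : n ≤ 1 := by
    by_contra hgt
    push_neg at hgt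
    obtain ⟨k, hk⟩ : ∃ k, n = k + 2 := ⟨n - 2, by omega⟩
    subst hk
    obtain ⟨l₂, hl₂⟩ := hQn
    have hfin := ((hPF 0).coeff (k+2)).finite_zeros hl₂
    obtain ⟨l, m, hlm, hl, hm⟩ := exists_pair_notin hfin
    simp only [Set.mem_setOf_eq] at hl hm
    have hdl : (p 0 l).natDegree ≤ (k+1)+1 := hdeg l
    have hdm : (p 0 m).natDegree ≤ (k+1)+1 := hdeg m
    have hdshl : (sh l (p 0 m)).natDegree ≤ (k+1)+1 := by rw [natDegree_sh]; exact hdm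
    have hdshm : (sh m (p 0 l)).natDegree ≤ (k+1)+1 := by rw [natDegree_sh]; exact hdl
    have h1 := congrArg (fun q => Polynomial.coeff q (2*(k+1)+1)) (hE 0 0 l m)
    simp only [add_zero, coeff_sub, coeff_C_mul] at h1
    rw [coeff_mul_near_top hdshl hdl, coeff_mul_near_top hdshm hdm] at h1
    rw [sh_coeff_top hdm, sh_coeff_pred hdm, sh_coeff_top hdl, sh_coeff_pred hdl] at h1
    have hz : (p 0 (l+m)).coeff (2*(k+1)+1) = 0 :=
      coeff_eq_zero_of_natDegree_lt (by have := hdeg (l+m); omega)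
    rw [hz, mul_zero] at h1
    have hfz : (((k:ℂ)+2) * (l - m)) * ((p 0 l).coeff (k+1+1) * (p 0 m).coeff (k+1+1)) = 0 := by
      push_cast at h1 ⊢
      linear_combination -h1
    exact (mul_ne_zero (mul_ne_zero (nat_cast_add_two_ne k) (sub_ne_zero.mpr hlm))
      (mul_ne_zero hl hm)) hfz
  have hn : n = 1 := le_antisymm hn2 hn1
  subst hn
  set γ1 : ℂ → ℂ := fun l => (p 0 l).coeff 1 with hγ1def
  set γ0 : ℂ → ℂ := fun l => (p 0 l).coeff 0 with hγ0def
  have hform : ∀ l, p 0 l = C (γ1 l) * X + C (γ0 l) := fun l =>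
    eq_X_add_C_of_natDegree_le_one (hdeg l)
  have keyscal : ∀ l m, (l-m) * γ1 (l+m) = (l-m) * (γ1 l * γ1 m)
               ∧ (l-m) * γ0 (l+m) = l * γ1 m * γ0 l - m * γ1 l * γ0 m := by
    intro l m
    have h1 := hE 0 0 l m
    simp only [add_zero] at h1
    rw [hform (l+m), hform l, hform m, sh_linear, sh_linear] at h1
    have hd := congrArg (fun q => Polynomial.eval 0 (Polynomial.derivative q)) h1
    have he := congrArg (fun q => Polynomial.eval 0 q) h1
    simp only [derivative_mul, derivative_add, derivative_sub, derivative_C, derivative_X,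
      eval_add, eval_sub, eval_mul, eval_X, eval_C, eval_zero, zero_mul, mul_zero, add_zero,
      zero_add, mul_one, one_mul] at hd he
    constructor
    · linear_combination hd
    · linear_combination he
  have hPF1 : PFs γ1 := (hPF 0).coeff 1
  have hPF0 : PFs γ0 := (hPF 0).coeff 0
  have hγ10 : γ1 0 = 1 := by rw [hγ1def]; simp only [hb]; simp
  have hmul : ∀ l m, γ1 (l+m) = γ1 l * γ1 m := by
    intro l
    refine PFs.ext_of_cofinite (hPF1.shift l) ((PFs.const (γ1 l)).mul hPF1)
      (Set.finite_singleton l) ?_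
    intro m hm
    have h := (keyscal l m).1
    have hne : l - m ≠ 0 := sub_ne_zero.mpr (fun h' => hm (by simp [h']))
    exact mul_left_cancel₀ hne h
  have hγ1 : ∀ l, γ1 l = 1 := one_of_multiplicative hPF1 hγ10 hmul
  have haff : ∃ a, ∀ l, γ0 l = a * l + γ0 0 := by
    apply affine_of_funeq hPF0
    intro l m
    have h := (keyscal l m).2
    rw [hγ1 l, hγ1 m] at h
    linear_combination h
  obtain ⟨a, ha⟩ := haff
  have hγ00 : γ0 0 = b := by rw [hγ0def]; simp only [hb]; simp
  refine ⟨a, b, fun l => ?_⟩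
  rw [hform l, hγ1 l, ha l, hγ00, map_one, one_mul]

lemma vir_loop {a b : ℂ} (hp0 : ∀ l, p 0 l = X + C (a*l + b)) (i : ℤ) :
    ∃ κ : ℂ, ∀ l, p i l = C κ * (X + C (a * l + b)) := by
  by_cases hz : ∀ l, p i l = 0
  · exact ⟨0, fun l => by rw [hz l, map_zero, zero_mul]⟩
  push_neg at hz
  obtain ⟨n, hdeg, hQn⟩ := top_index (hPF i) hz
  have master : ∀ l m, (l - m) * (p i (l+m)).coeff n = (l - (n:ℂ)*m) * ((p i l).coeff n) := by
    intro l m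
    have h1 := hE i 0 l m
    simp only [add_zero] at h1
    rw [hp0 m, sh_linX, mul_comm (X + C (l + (a*m+b))) (p i l)] at h1
    match n, hdeg, hQn with
    | 0, hdeg, hQn =>
        have h2 := congrArg (fun q => Polynomial.coeff q 0) h1
        simp only [coeff_sub, coeff_C_mul, mul_coeff_zero, coeff_add, coeff_X_zero, coeff_C,
          zero_add] at h2
        norm_num at h2
        rw [sh_coeff_top (hdeg l)] at h2
        push_cast
        linear_combination h2
    | (k+1), hdeg, hQn =>
        have h2 := congrArg (fun q => Polynomial.coeff q (k+1)) h1
        simp only [coeff_sub, coeff_C_mul] at h2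
        rw [coeff_mul_linear_succ (p i l) _ k (hdeg l),
          coeff_mul_linear_succ (sh m (p i l)) _ k (by rw [natDegree_sh]; exact hdeg l),
          sh_coeff_top (hdeg l), sh_coeff_pred (hdeg l)] at h2
        push_cast at h2 ⊢
        linear_combination h2
  have hconst : ∀ l, (p i l).coeff n = (n:ℂ) * ((p i 0).coeff n) := by
    refine PFs.ext_of_cofinite ((hPF i).coeff n) (PFs.const _) (Set.finite_singleton 0) ?_
    intro m hm
    have hmne : (m:ℂ) ≠ 0 := by simpa using hm
    have h := master 0 m
    simp only [zero_add, zero_sub, zero_mul] at h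
    have h' : m * ((p i m).coeff n) = m * ((n:ℂ) * ((p i 0).coeff n)) := by
      linear_combination -h
    exact mul_left_cancel₀ hmne h'
  match n, hdeg, hQn, hconst with
  | 0, hdeg, hQn, hconst =>
      exfalso
      obtain ⟨l3, h3⟩ := hQn
      exact h3 (by rw [hconst l3]; push_cast; ring)
  | (k+2), hdeg, hQn, hconst =>
      exfalso
      have h0 := hconst 0
      have hv : (p i 0).coeff (k+2) = 0 := by
        have hne : ((k:ℂ)+2) - 1 ≠ 0 := by
          intro h'
          have : (k:ℂ) + 1 = 0 := by linear_combination h'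
          exact nat_cast_add_one_ne k this
        have h'' : (((k:ℂ)+2) - 1) * ((p i 0).coeff (k+2)) = 0 := by
          push_cast at h0
          linear_combination -h0
        exact (mul_eq_zero.mp h'').resolve_left hne
      obtain ⟨l3, h3⟩ := hQn
      refine h3 ?_
      rw [hconst l3, hv, mul_zero]
  | 1, hdeg, hQn, hconst =>
      set κ := (p i 0).coeff 1 with hκdef
      have hγ1 : ∀ l, (p i l).coeff 1 = κ := fun l => by rw [hconst l]; push_cast; ring
      have hκne : κ ≠ 0 := by
        obtain ⟨l3, h3⟩ := hQn
        rw [hγ1 l3] at h3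
        exact h3
      have hform : ∀ l, p i l = C κ * X + C ((p i l).coeff 0) := by
        intro l
        have h' := eq_X_add_C_of_natDegree_le_one (hdeg l)
        rw [hγ1 l] at h'
        exact h'
      have hβeq : ∀ m, (p i m).coeff 0 = κ * (a * m + b) := by
        refine PFs.ext_of_cofinite ((hPF i).coeff 0) ((PFs.const κ).mul (PFs.linear a b))
          (Set.finite_singleton 0) ?_
        intro m hm
        have hmne : (m:ℂ) ≠ 0 := by simpa using hm
        have h1 := hE i 0 0 m
        simp only [add_zero, zero_add, zero_sub] at h1
        rw [hp0 m, sh_zero', hform 0, hform m, sh_linear] at h1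
        have he := congrArg (fun q => Polynomial.eval 0 q) h1
        simp only [eval_mul, eval_sub, eval_add, eval_X, eval_C, eval_neg, eval_zero, zero_add,
          mul_zero, zero_mul, add_zero] at he
        have h' : m * ((p i m).coeff 0) = m * (κ * (a * m + b)) := by linear_combination -he
        exact mul_left_cancel₀ hmne h'
      refine ⟨κ, fun l => ?_⟩
      rw [hform l, hβeq l]
      simp only [map_mul, map_add]
      ring

lemma phase1 (hnz : ∃ i l, p i l ≠ 0) :
    ∃ a b c : ℂ, c ≠ 0 ∧ ∀ i l, p i l = C (c ^ i) * (X + C (a * l + b)) := by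
  obtain ⟨a, b, hp0⟩ := vir_p0 hPF hE hnz
  choose κ hκ using fun i => vir_loop hPF hE hp0 i
  have hκ0 : κ 0 = 1 := by
    have h1 := hκ 0 0
    rw [hp0 0] at h1
    have h2 := congrArg (fun q => Polynomial.coeff q 1) h1
    simpa using h2.symm
  have hmul : ∀ i j, κ (i+j) = κ i * κ j := by
    intro i j
    have h1 := hE i j 1 0
    rw [hκ (i+j), hκ i, hκ j, sh_zero'] at h1
    rw [sh_mul, sh_C, sh_linX] at h1
    have h2 := congrArg (fun q => Polynomial.eval 0 (Polynomial.derivative q)) h1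
    simp only [derivative_mul, derivative_add, derivative_sub, derivative_C, derivative_X,
      eval_add, eval_sub, eval_mul, eval_X, eval_C, eval_zero, zero_mul, mul_zero, add_zero,
      zero_add, mul_one, one_mul] at h2
    linear_combination h2
  obtain ⟨hc, hzpow⟩ := zpow_of_multiplicative κ hκ0 hmul
  exact ⟨a, b, κ 1, hc, fun i l => by rw [hκ i, hzpow i]⟩

end Phase1

lemma comp_shift (Φ : V →ₗ[ℂ] V) (l : ℂ)
    (hd : ∀ v : V, Φ (dV v) = dV (Φ v) + l • Φ v) (f g : P) :
    Φ (f, g) = (sh l f * (Φ (1,0)).1 + sh l g * (Φ (0,1)).1,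
                sh l f * (Φ (1,0)).2 + sh l g * (Φ (0,1)).2) := by
  have hXf : ∀ h : P, ((X * h, (0:P)) : V) = dV (h, 0) := by intro h; simp [dV]
  have hXg : ∀ h : P, (((0:P), X * h) : V) = dV (0, h) := by intro h; simp [dV]
  have h1 : ∀ h : P, (Φ (h, 0)).1 = sh l h * (Φ (1,0)).1 := by
    intro h
    have hkey := linmap_shift ((LinearMap.fst ℂ P P).comp (Φ.comp (LinearMap.inl ℂ P P))) l ?_ h
    · simpa using hkey
    · intro f'
      simp only [LinearMap.comp_apply, LinearMap.inl_apply, LinearMap.fst_apply]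
      rw [hXf f', hd (f', 0)]
      simp only [dV, Prod.fst_add, Prod.smul_fst, smul_eq_C_mul]
      ring
  have h2 : ∀ h : P, (Φ (h, 0)).2 = sh l h * (Φ (1,0)).2 := by
    intro h
    have hkey := linmap_shift ((LinearMap.snd ℂ P P).comp (Φ.comp (LinearMap.inl ℂ P P))) l ?_ h
    · simpa using hkey
    · intro f'
      simp only [LinearMap.comp_apply, LinearMap.inl_apply, LinearMap.snd_apply]
      rw [hXf f', hd (f', 0)]
      simp only [dV, Prod.snd_add, Prod.smul_snd, smul_eq_C_mul]
      ring
  have h3 : ∀ h : P, (Φ (0, h)).1 = sh l h * (Φ (0,1)).1 := by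
    intro h
    have hkey := linmap_shift ((LinearMap.fst ℂ P P).comp (Φ.comp (LinearMap.inr ℂ P P))) l ?_ h
    · simpa using hkey
    · intro f'
      simp only [LinearMap.comp_apply, LinearMap.inr_apply, LinearMap.fst_apply]
      rw [hXg f', hd (0, f')]
      simp only [dV, Prod.fst_add, Prod.smul_fst, smul_eq_C_mul]
      ring
  have h4 : ∀ h : P, (Φ (0, h)).2 = sh l h * (Φ (0,1)).2 := by
    intro h
    have hkey := linmap_shift ((LinearMap.snd ℂ P P).comp (Φ.comp (LinearMap.inr ℂ P P))) l ?_ h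
    · simpa using hkey
    · intro f'
      simp only [LinearMap.comp_apply, LinearMap.inr_apply, LinearMap.snd_apply]
      rw [hXg f', hd (0, f')]
      simp only [dV, Prod.snd_add, Prod.smul_snd, smul_eq_C_mul]
      ring
  have hsplit : ((f, g) : V) = (f, 0) + (0, g) := by simp
  rw [hsplit, map_add]
  apply Prod.ext
  · simp only [Prod.fst_add]
    rw [h1 f, h3 g]
  · simp only [Prod.snd_add]
    rw [h2 f, h4 g]

/-- classification of the `s` family: constant top coefficient, определ degree. -/
lemma s_analysis {s : ℂ → P} (hPFs : PF s) {a b a' b' : ℂ}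
    (heq : ∀ l m, C (1/2*l - m) * s (l+m)
      = sh l (s m) * (X + C (a'*l + b')) - (X + C (m + (a*l + b))) * s m)
    (hne : ∀ l, s l ≠ 0) :
    ∃ (n : ℕ) (K : ℂ), K ≠ 0 ∧ ((n:ℂ) + a' - a = 1/2) ∧ b' = b ∧
      ∀ l, (s l).natDegree ≤ n ∧ (s l).coeff n = K := by
  obtain ⟨n, hdeg, hQn⟩ := top_index hPFs ⟨0, hne 0⟩
  have master : ∀ l m, (1/2*l - m) * (s (l+m)).coeff n
      = (((n:ℂ) + a' - a)*l - m + (b' - b)) * ((s m).coeff n) := by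
    intro l m
    have h1 := heq l m
    match n, hdeg, hQn with
    | 0, hdeg, hQn =>
        have h2 := congrArg (fun q => Polynomial.coeff q 0) h1
        simp only [coeff_sub, coeff_C_mul, mul_coeff_zero, coeff_add, coeff_X_zero, coeff_C,
          zero_add] at h2
        norm_num at h2
        rw [sh_coeff_top (hdeg m)] at h2
        push_cast
        linear_combination h2
    | (k+1), hdeg, hQn =>
        rw [mul_comm (X + C (m + (a*l+b))) (s m)] at h1
        have h2 := congrArg (fun q => Polynomial.coeff q (k+1)) h1
        simp only [coeff_sub, coeff_C_mul] at h2
        rw [coeff_mul_linear_succ (sh l (s m)) _ k (by rw [natDegree_sh]; exact hdeg m),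
          coeff_mul_linear_succ (s m) _ k (hdeg m),
          sh_coeff_top (hdeg m), sh_coeff_pred (hdeg m)] at h2
        push_cast at h2 ⊢
        linear_combination h2
  obtain ⟨m₀, hm₀⟩ := hQn
  have hbb : b' = b := by
    have h := master 0 m₀
    simp only [zero_add, mul_zero, zero_sub] at h
    have h' : (b' - b) * ((s m₀).coeff n) = 0 := by linear_combination -h
    have h'' := (mul_eq_zero.mp h').resolve_right hm₀
    linear_combination h''
  rw [hbb] at master
  simp only [sub_self, add_zero] at master
  have hμ0 : ∀ l, (s l).coeff n = 2 * ((n:ℂ) + a' - a) * ((s 0).coeff n) := by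
    refine PFs.ext_of_cofinite (hPFs.coeff n) (PFs.const _) (Set.finite_singleton 0) ?_
    intro l hl
    have hlne : (l:ℂ) ≠ 0 := by simpa using hl
    have h := master l 0
    simp only [add_zero, sub_zero, mul_zero] at h
    have h' : (1/2*l) * ((s l).coeff n) = (1/2*l) * (2 * ((n:ℂ) + a' - a) * ((s 0).coeff n)) := by
      linear_combination h
    exact mul_left_cancel₀ (by simpa using hlne) h'
  have hs0 : (s 0).coeff n ≠ 0 := by
    intro hz
    rcases eq_or_ne m₀ 0 with rfl | hm
    · exact hm₀ hz
    · exact hm₀ (by rw [hμ0 m₀, hz, mul_zero])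
  have hfac : (n:ℂ) + a' - a = 1/2 := by
    have h := hμ0 0
    have h' : (1 - 2*((n:ℂ) + a' - a)) * ((s 0).coeff n) = 0 := by linear_combination h
    have := (mul_eq_zero.mp h').resolve_right hs0
    linear_combination -this/2
  refine ⟨n, (s 0).coeff n, hs0, hfac, hbb, fun l => ⟨hdeg l, ?_⟩⟩
  rw [hμ0 l, hfac]
  ring

@[simp] lemma coeff1_lin (β : ℂ) : ((X + C β : P)).coeff 1 = 1 := by
  simp [coeff_add, coeff_C]

@[simp] lemma coeff1_Clin (α β : ℂ) : ((C α * (X + C β) : P)).coeff 1 = α := by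
  simp [coeff_C_mul]

noncomputable def scaleFst (t : ℂ) (ht : t ≠ 0) : V ≃ₗ[ℂ] V where
  toFun v := (C t * v.1, v.2)
  map_add' v w := by simp [mul_add]
  map_smul' cc v := by simp [Prod.smul_def, smul_eq_C_mul]; ring
  invFun v := (C t⁻¹ * v.1, v.2)
  left_inv v := by simp [← mul_assoc, ← map_mul, inv_mul_cancel₀ ht]
  right_inv v := by simp [← mul_assoc, ← map_mul, mul_inv_cancel₀ ht]

@[simp] lemma scaleFst_apply (t : ℂ) (ht : t ≠ 0) (v : V) :
    scaleFst t ht v = (C t * v.1, v.2) := rfl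

noncomputable def scaleSnd (t : ℂ) (ht : t ≠ 0) : V ≃ₗ[ℂ] V where
  toFun v := (v.1, C t * v.2)
  map_add' v w := by simp [mul_add]
  map_smul' cc v := by simp [Prod.smul_def, smul_eq_C_mul]; ring
  invFun v := (v.1, C t⁻¹ * v.2)
  left_inv v := by simp [← mul_assoc, ← map_mul, inv_mul_cancel₀ ht]
  right_inv v := by simp [← mul_assoc, ← map_mul, mul_inv_cancel₀ ht]

@[simp] lemma scaleSnd_apply (t : ℂ) (ht : t ≠ 0) (v : V) :
    scaleSnd t ht v = (v.1, C t * v.2) := rfl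

end ClsAux

open ClsAux in
/-- every nontrivial free conformal `𝔠𝔩𝔰`-module of rank two, with even
part `ℂ[∂]x` and odd part `ℂ[∂]y`, is isomorphic to some `M_{a,b,c}` or `M'_{a,b,c}`. -/
theorem stmt13 (LA GA : ℤ → ℂ → V →ₗ[ℂ] V) (hmod : IsClsModule LA GA)
    (hnontriv : ¬ ∀ (i : ℤ) (l : ℂ) (v : V), LA i l v = 0 ∧ GA i l v = 0) :
    ∃ (a b c : ℂ), c ≠ 0 ∧
      (ClsIso (fun i l v => LA i l v) (fun i l v => GA i l v) (LM a b c) (GM a b c)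
      ∨ ClsIso (fun i l v => LA i l v) (fun i l v => GA i l v) (LM' a b c) (GM' a b c)) := by
  classical
  obtain ⟨hd, hpar, hpoly, hjac⟩ := hmod
  set pp : ℤ → ℂ → P := fun i l => (LA i l (1, 0)).1 with hppdef
  set qq : ℤ → ℂ → P := fun i l => (LA i l (0, 1)).2 with hqqdef
  set rr : ℤ → ℂ → P := fun i l => (GA i l (0, 1)).1 with hrrdef
  set ss : ℤ → ℂ → P := fun i l => (GA i l (1, 0)).2 with hssdef
  have hLA : ∀ (i : ℤ) (l : ℂ) (f g : P), LA i l (f, g) = (sh l f * pp i l, sh l g * qq i l) := by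
    intro i l f g
    have h := comp_shift (LA i l) l (fun v => (hd i l v).1) f g
    have hz1 : (LA i l ((1:P), (0:P))).2 = 0 := ((hpar i l (1,0)).1 rfl).1
    have hz2 : (LA i l ((0:P), (1:P))).1 = 0 := ((hpar i l (0,1)).2 rfl).1
    rw [h, hz1, hz2, mul_zero, mul_zero, add_zero, zero_add]
  have hGA : ∀ (i : ℤ) (l : ℂ) (f g : P), GA i l (f, g) = (sh l g * rr i l, sh l f * ss i l) := by
    intro i l f g
    have h := comp_shift (GA i l) l (fun v => (hd i l v).2) f g
    have hz1 : (GA i l ((1:P), (0:P))).1 = 0 := ((hpar i l (1,0)).1 rfl).2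
    have hz2 : (GA i l ((0:P), (1:P))).2 = 0 := ((hpar i l (0,1)).2 rfl).2
    rw [h, hz1, hz2, mul_zero, mul_zero, add_zero, zero_add]
  -- polynomiality
  have hPFp : ∀ i, PF (pp i) := by
    intro i
    obtain ⟨N, w, u, hwu⟩ := hpoly i (1, 0)
    refine ⟨N, fun k => (w k).1, fun l => ?_⟩
    show (LA i l (1, 0)).1 = _
    rw [(hwu l).1, Prod.fst_sum]
    exact Finset.sum_congr rfl (fun k _ => rfl)
  have hPFq : ∀ i, PF (qq i) := by
    intro i
    obtain ⟨N, w, u, hwu⟩ := hpoly i (0, 1)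
    refine ⟨N, fun k => (w k).2, fun l => ?_⟩
    show (LA i l (0, 1)).2 = _
    rw [(hwu l).1, Prod.snd_sum]
    exact Finset.sum_congr rfl (fun k _ => rfl)
  have hPFr : ∀ i, PF (rr i) := by
    intro i
    obtain ⟨N, w, u, hwu⟩ := hpoly i (0, 1)
    refine ⟨N, fun k => (u k).1, fun l => ?_⟩
    show (GA i l (0, 1)).1 = _
    rw [(hwu l).2, Prod.fst_sum]
    exact Finset.sum_congr rfl (fun k _ => rfl)
  have hPFs : ∀ i, PF (ss i) := by
    intro i
    obtain ⟨N, w, u, hwu⟩ := hpoly i (1, 0)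
    refine ⟨N, fun k => (u k).2, fun l => ?_⟩
    show (GA i l (1, 0)).2 = _
    rw [(hwu l).2, Prod.snd_sum]
    exact Finset.sum_congr rfl (fun k _ => rfl)
  -- basic evaluations
  have eL10 : ∀ (i : ℤ) (l : ℂ), LA i l (1, 0) = (pp i l, 0) := by
    intro i l; rw [hLA i l 1 0]; simp
  have eL01 : ∀ (i : ℤ) (l : ℂ), LA i l (0, 1) = (0, qq i l) := by
    intro i l; rw [hLA i l 0 1]; simp
  have eG10 : ∀ (i : ℤ) (l : ℂ), GA i l (1, 0) = (0, ss i l) := by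
    intro i l; rw [hGA i l 1 0]; simp
  have eG01 : ∀ (i : ℤ) (l : ℂ), GA i l (0, 1) = (rr i l, 0) := by
    intro i l; rw [hGA i l 0 1]; simp
  -- the six functional equations
  have hE1 : ∀ i j l m, C (l-m) * pp (i+j) (l+m)
      = sh l (pp j m) * pp i l - sh m (pp i l) * pp j m := by
    intro i j l m
    have h := congrArg Prod.fst (hjac i j l m (1,0)).1
    rw [eL10 j m, eL10 i l, hLA i l (pp j m) 0, hLA j m (pp i l) 0, eL10 (i+j) (l+m)] at h
    simpa [smul_eq_C_mul] using h
  have hE2 : ∀ i j l m, C (l-m) * qq (i+j) (l+m)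
      = sh l (qq j m) * qq i l - sh m (qq i l) * qq j m := by
    intro i j l m
    have h := congrArg Prod.snd (hjac i j l m (0,1)).1
    rw [eL01 j m, eL01 i l, hLA i l 0 (qq j m), hLA j m 0 (qq i l), eL01 (i+j) (l+m)] at h
    simpa [smul_eq_C_mul] using h
  have hE3 : ∀ i j l m, C (1/2*l-m) * ss (i+j) (l+m)
      = sh l (ss j m) * qq i l - sh m (pp i l) * ss j m := by
    intro i j l m
    have h := congrArg Prod.snd (hjac i j l m (1,0)).2.1
    rw [eG10 j m, eL10 i l, hLA i l 0 (ss j m), hGA j m (pp i l) 0, eG10 (i+j) (l+m)] at h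
    simpa [smul_eq_C_mul] using h
  have hE4 : ∀ i j l m, C (1/2*l-m) * rr (i+j) (l+m)
      = sh l (rr j m) * pp i l - sh m (qq i l) * rr j m := by
    intro i j l m
    have h := congrArg Prod.fst (hjac i j l m (0,1)).2.1
    rw [eG01 j m, eL01 i l, hLA i l (rr j m) 0, hGA j m 0 (qq i l), eG01 (i+j) (l+m)] at h
    simpa [smul_eq_C_mul] using h
  have hE5 : ∀ i j l m, C (2:ℂ) * pp (i+j) (l+m)
      = sh l (ss j m) * rr i l + sh m (ss i l) * rr j m := by
    intro i j l m
    have h := congrArg Prod.fst (hjac i j l m (1,0)).2.2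
    rw [eG10 j m, eG10 i l, hGA i l 0 (ss j m), hGA j m 0 (ss i l), eL10 (i+j) (l+m)] at h
    simpa [smul_eq_C_mul] using h
  have hE6 : ∀ i j l m, C (2:ℂ) * qq (i+j) (l+m)
      = sh l (rr j m) * ss i l + sh m (rr i l) * ss j m := by
    intro i j l m
    have h := congrArg Prod.snd (hjac i j l m (0,1)).2.2
    rw [eG01 j m, eG01 i l, hGA i l (rr j m) 0, hGA j m (rr i l) 0, eL01 (i+j) (l+m)] at h
    simpa [smul_eq_C_mul] using h
  -- nontriviality of the four families
  have hnz4 : ∃ i l, pp i l ≠ 0 ∨ qq i l ≠ 0 ∨ rr i l ≠ 0 ∨ ss i l ≠ 0 := by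
    by_contra hcon
    push_neg at hcon
    apply hnontriv
    intro i l v
    obtain ⟨h1, h2, h3, h4⟩ := hcon i l
    constructor
    · have hv := hLA i l v.1 v.2
      rw [Prod.mk.eta] at hv
      rw [hv, h1, h2, mul_zero, mul_zero]
      rfl
    · have hv := hGA i l v.1 v.2
      rw [Prod.mk.eta] at hv
      rw [hv, h3, h4, mul_zero, mul_zero]
      rfl
  have hCne : ∀ x : ℂ, x ≠ 0 → (C x : P) ≠ 0 := fun x hx => by
    rw [Polynomial.C_ne_zero]; exact hx
  have hC2 : (C (2:ℂ) : P) ≠ 0 := hCne 2 two_ne_zero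
  have himp1 : (∃ i l, pp i l ≠ 0) → (∃ i l, qq i l ≠ 0) := by
    intro hp
    by_contra hq
    push_neg at hq
    obtain ⟨a, b, c, hc, hpf⟩ := phase1 hPFp hE1 hp
    have hprod : rr (0:ℤ) (0:ℂ) * ss 0 0 = 0 := by
      have h6 := hE6 0 0 0 0
      rw [hq (0+0) (0+0), sh_zero'] at h6
      have h6' : rr (0:ℤ) (0:ℂ) * ss 0 0 + rr 0 0 * ss 0 0 = 0 := by
        linear_combination -h6
      exact add_self_eq_zero.mp h6'
    have key : pp 0 0 = 0 := by
      have h5 := hE5 0 0 0 0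
      simp only [add_zero] at h5
      rw [sh_zero', mul_comm (ss (0:ℤ) (0:ℂ)) (rr (0:ℤ) (0:ℂ)), hprod] at h5
      simp only [add_zero] at h5
      exact (mul_eq_zero.mp h5).resolve_left hC2
    have h00 := hpf 0 0
    rw [key] at h00
    simp only [zpow_zero, map_one, one_mul] at h00
    exact (X_add_C_ne_zero _) h00.symm
  have himp2 : (∃ i l, qq i l ≠ 0) → (∃ i l, pp i l ≠ 0) := by
    intro hq
    by_contra hp
    push_neg at hp
    obtain ⟨a, b, c, hc, hqf⟩ := phase1 hPFq hE2 hq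
    have hprod : ss (0:ℤ) (0:ℂ) * rr 0 0 = 0 := by
      have h5 := hE5 0 0 0 0
      rw [hp (0+0) (0+0), sh_zero'] at h5
      have h5' : ss (0:ℤ) (0:ℂ) * rr 0 0 + ss 0 0 * rr 0 0 = 0 := by
        linear_combination -h5
      exact add_self_eq_zero.mp h5'
    have key : qq 0 0 = 0 := by
      have h6 := hE6 0 0 0 0
      simp only [add_zero] at h6
      rw [sh_zero', mul_comm (rr (0:ℤ) (0:ℂ)) (ss (0:ℤ) (0:ℂ)), hprod] at h6
      simp only [add_zero] at h6
      exact (mul_eq_zero.mp h6).resolve_left hC2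
    have h00 := hqf 0 0
    rw [key] at h00
    simp only [zpow_zero, map_one, one_mul] at h00
    exact (X_add_C_ne_zero _) h00.symm
  have hrs : (∀ i l, pp i l = 0) → (∀ i l, qq i l = 0) →
      (∀ i l, rr i l = 0) ∧ (∀ i l, ss i l = 0) := by
    intro hp0 hq0
    have hs : ∀ (j : ℤ) (m : ℂ), ss j m = 0 := by
      intro j m
      rcases eq_or_ne m 0 with rfl | hm
      · have h := hE3 0 j 2 (-2)
        rw [hq0, hp0] at h
        rw [show ((2:ℂ) + -2) = 0 from by norm_num] at h
        simp only [mul_zero, sh_zero, zero_mul, sub_zero, zero_add] at h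
        exact (mul_eq_zero.mp h).resolve_left (hCne _ (by norm_num))
      · have h := hE3 0 j 0 m
        rw [hq0, hp0] at h
        simp only [mul_zero, sh_zero, zero_mul, sub_zero, zero_add, zero_sub] at h
        exact (mul_eq_zero.mp h).resolve_left (hCne _ (by simpa using hm))
    have hr : ∀ (j : ℤ) (m : ℂ), rr j m = 0 := by
      intro j m
      rcases eq_or_ne m 0 with rfl | hm
      · have h := hE4 0 j 2 (-2)
        rw [hp0, hq0] at h
        rw [show ((2:ℂ) + -2) = 0 from by norm_num] at h
        simp only [mul_zero, sh_zero, zero_mul, sub_zero, zero_add] at h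
        exact (mul_eq_zero.mp h).resolve_left (hCne _ (by norm_num))
      · have h := hE4 0 j 0 m
        rw [hp0, hq0] at h
        simp only [mul_zero, sh_zero, zero_mul, sub_zero, zero_add, zero_sub] at h
        exact (mul_eq_zero.mp h).resolve_left (hCne _ (by simpa using hm))
    exact ⟨hr, hs⟩
  have hPorQ : (∃ i l, pp i l ≠ 0) ∨ (∃ i l, qq i l ≠ 0) := by
    by_contra hno
    push_neg at hno
    obtain ⟨hp0, hq0⟩ := hno
    obtain ⟨hr0, hs0⟩ := hrs hp0 hq0
    rcases hnz4 with ⟨i, l, h | h | h | h⟩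
    exacts [h (hp0 i l), h (hq0 i l), h (hr0 i l), h (hs0 i l)]
  have hpex : ∃ i l, pp i l ≠ 0 := by
    rcases hPorQ with h | h
    · exact h
    · exact himp2 h
  have hqex : ∃ i l, qq i l ≠ 0 := himp1 hpex
  obtain ⟨a, b, c, hc, hpf⟩ := phase1 hPFp hE1 hpex
  obtain ⟨a', b', d, hdne, hqf⟩ := phase1 hPFq hE2 hqex
  have hXCne : ∀ β : ℂ, (X + C β : P) ≠ 0 := fun β => X_add_C_ne_zero β
  have h2a : ∀ (i : ℤ) (l : ℂ), sh l (ss i l) * rr i l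
      = C (c ^ (i+i)) * (X + C (a*(l+l) + b)) := by
    intro i l
    have h := hE5 i i l l
    rw [hpf (i+i) (l+l), show (C (2:ℂ) : P) = 2 from map_ofNat C 2] at h
    apply mul_left_cancel₀ (two_ne_zero (α := P))
    linear_combination -h
  have h2a' : ∀ (i : ℤ) (l : ℂ), sh l (rr i l) * ss i l
      = C (d ^ (i+i)) * (X + C (a'*(l+l) + b')) := by
    intro i l
    have h := hE6 i i l l
    rw [hqf (i+i) (l+l), show (C (2:ℂ) : P) = 2 from map_ofNat C 2] at h
    apply mul_left_cancel₀ (two_ne_zero (α := P))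
    linear_combination -h
  have hrne : ∀ (i : ℤ) (l : ℂ), rr i l ≠ 0 := by
    intro i l hz
    have h := h2a i l
    rw [hz, mul_zero] at h
    exact (mul_ne_zero (hCne _ (zpow_ne_zero _ hc)) (hXCne _)) h.symm
  have hsne : ∀ (i : ℤ) (l : ℂ), ss i l ≠ 0 := by
    intro i l hz
    have h := h2a i l
    rw [hz, sh_zero, zero_mul] at h
    exact (mul_ne_zero (hCne _ (zpow_ne_zero _ hc)) (hXCne _)) h.symm
  have hsan : ∀ j : ℤ, ∃ (n : ℕ) (K : ℂ), K ≠ 0 ∧ ((n:ℂ) + a' - a = 1/2) ∧ b' = b ∧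
      ∀ l, (ss j l).natDegree ≤ n ∧ (ss j l).coeff n = K := by
    intro j
    refine s_analysis (hPFs j) ?_ (fun l => hsne j l)
    intro l m
    have h := hE3 0 j l m
    rw [hqf 0 l, hpf 0 l] at h
    simp only [zpow_zero, map_one, one_mul, zero_add] at h
    rw [sh_linX] at h
    exact h
  choose nj K hKne hfacj hbbj hdcj using hsan
  have hb' : b' = b := hbbj 0
  have hdegss : ∀ (j : ℤ) (l : ℂ), (ss j l).natDegree = nj j := by
    intro j l
    refine le_antisymm (hdcj j l).1 (le_natDegree_of_ne_zero ?_)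
    rw [(hdcj j l).2]
    exact hKne j
  have hnj0 : ∀ j, nj j = nj 0 := by
    intro j
    have h1 := hfacj j
    have h2 := hfacj 0
    have h3 : ((nj j : ℂ)) = ((nj 0 : ℂ)) := by linear_combination h1 - h2
    exact_mod_cast h3
  have hdegsum : ∀ (i : ℤ) (l : ℂ), (ss i l).natDegree + (rr i l).natDegree = 1 := by
    intro i l
    have h := congrArg Polynomial.natDegree (h2a i l)
    rw [natDegree_mul (by rw [Ne, sh_eq_zero_iff]; exact hsne i l) (hrne i l), natDegree_sh,
      natDegree_C_mul (zpow_ne_zero _ hc), natDegree_X_add_C] at h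
    exact h
  have hn01 : nj 0 = 0 ∨ nj 0 = 1 := by
    have h := hdegsum 0 0
    rw [hdegss 0 0] at h
    omega
  rcases hn01 with hn | hn
  · -- case M
    set t := K 0 with htdef
    have htne : t ≠ 0 := hKne 0
    have ha' : a' = a + 1/2 := by
      have h := hfacj 0
      rw [hn] at h
      push_cast at h
      linear_combination h
    have hsc : ∀ (j : ℤ) (l : ℂ), ss j l = C (K j) := by
      intro j l
      have h1 : (ss j l).natDegree ≤ 0 := by rw [hdegss j l, hnj0 j, hn]
      have h2 := (hdcj j l).2
      rw [hnj0 j, hn] at h2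
      rw [eq_C_of_natDegree_le_zero h1, h2]
    have hrf : ∀ (i : ℤ) (l : ℂ),
        rr i l = C ((K i)⁻¹ * c ^ (i+i)) * (X + C (a*(l+l) + b)) := by
      intro i l
      have h := h2a i l
      rw [hsc i l, sh_C] at h
      apply mul_left_cancel₀ (hCne _ (hKne i))
      rw [h, show (C (K i) : P) * (C ((K i)⁻¹ * c^(i+i)) * (X + C (a*(l+l)+b)))
          = (C (K i) * C ((K i)⁻¹ * c^(i+i))) * (X + C (a*(l+l)+b)) from by ring,
        ← map_mul, show K i * ((K i)⁻¹ * c^(i+i)) = c^(i+i) from by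
          rw [← mul_assoc, mul_inv_cancel₀ (hKne i), one_mul]]
    have hKrel : ∀ i : ℤ, K i = t * c ^ i := by
      intro i
      have h := hE5 i 0 0 0
      rw [hpf (i+0) (0+0), hsc 0 0, hsc i 0, sh_C, hrf i 0, hrf 0 0] at h
      have h1 := congrArg (fun q => Polynomial.coeff q 1) h
      simp only [coeff_C_mul, coeff1_Clin, coeff1_lin, mul_one] at h1
      simp only [add_zero, zpow_zero] at h1
      rw [show c^(i+i) = c^i * c^i from zpow_add₀ hc i i] at h1
      have hcine : (c:ℂ)^i ≠ 0 := zpow_ne_zero _ hc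
      have hsq : (K i - t * c ^ i)^2 = 0 := by
        simp only [coeff_add, coeff_C_mul, coeff1_lin, sh_C, mul_one, coeff_X_one,
          coeff_C_ne_zero one_ne_zero, add_zero] at h1
        rw [← htdef] at h1
        field_simp [hKne i, htne] at h1
        linear_combination -h1
      have h5 := pow_eq_zero_iff (two_ne_zero) |>.mp hsq
      linear_combination h5
    have hdc : ∀ i : ℤ, d ^ i = c ^ i := by
      intro i
      have h := hE3 i 0 1 0
      rw [hqf i 1, hpf i 1, hsc 0 0, hsc (i+0) (1+0), sh_C, sh_zero'] at h
      have h1 := congrArg (fun q => Polynomial.coeff q 1) h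
      simp only [coeff_C_mul, coeff_mul_C, coeff1_Clin, coeff_C, mul_one] at h1
      norm_num at h1
      have h2 : K 0 * (d^i - c^i) = 0 := by linear_combination -h1
      have h3 := (mul_eq_zero.mp h2).resolve_left (hKne 0)
      linear_combination h3
    have hss2 : ∀ (i : ℤ) (l : ℂ), ss i l = C (t * c^i) := by
      intro i l
      rw [hsc i l, hKrel i]
    have hrf2 : ∀ (i : ℤ) (l : ℂ), rr i l = C (t⁻¹ * c^i) * (X + C (2*a*l + b)) := by
      intro i l
      rw [hrf i l, hKrel i, show a*(l+l)+b = 2*a*l+b from by ring,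
        show c^(i+i) = c^i * c^i from zpow_add₀ hc i i]
      congr 2
      have hcine : (c:ℂ)^i ≠ 0 := zpow_ne_zero _ hc
      field_simp
    have hcanc : ∀ i : ℤ, (C t : P) * C (t⁻¹ * c^i) = C (c^i) := by
      intro i
      rw [← map_mul]
      congr 1
      field_simp
    refine ⟨a, b, c, hc, Or.inl ?_⟩
    unfold ClsIso
    refine ⟨scaleFst t htne, ?_, ?_, ?_, ?_⟩
    · intro v
      simp only [scaleFst_apply, dV]
      exact Prod.ext (by ring) rfl
    · intro v hv
      simpa using hv
    · intro v hv
      simp only [scaleFst_apply, hv, mul_zero]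
    · intro i l v
      have hv : v = (v.1, v.2) := rfl
      constructor
      · show (scaleFst t htne) (LA i l v) = LM a b c i l ((scaleFst t htne) v)
        rw [hv, hLA i l v.1 v.2]
        simp only [scaleFst_apply, LM]
        rw [hpf i l, hqf i l, hdc i, ha', hb', sh_mul, sh_C]
        exact Prod.ext (by ring) (by ring)
      · show (scaleFst t htne) (GA i l v) = GM a b c i l ((scaleFst t htne) v)
        rw [hv, hGA i l v.1 v.2]
        simp only [scaleFst_apply, GM]
        rw [hrf2 i l, hss2 i l, sh_mul, sh_C]
        refine Prod.ext ?_ ?_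
        · show C t * (sh l v.2 * (C (t⁻¹ * c^i) * (X + C (2*a*l+b)))) = C (c^i) * sh l v.2 * (X + C (2*a*l+b))
          linear_combination (sh l v.2 * (X + C (2*a*l+b))) * hcanc i
        · show sh l v.1 * C (t * c^i) = C (c^i) * (C t * sh l v.1)
          rw [map_mul]
          ring
  · -- case M'
    have hnz1 : ∀ j, nj j = 1 := fun j => (hnj0 j).trans hn
    have ha' : a' = a - 1/2 := by
      have h := hfacj 0
      rw [hn] at h
      push_cast at h
      linear_combination h
    have hdegr0 : ∀ (j : ℤ) (l : ℂ), (rr j l).natDegree = 0 := by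
      intro j l
      have h := hdegsum j l
      rw [hdegss j l, hnz1 j] at h
      omega
    have hrc : ∀ (j : ℤ) (l : ℂ), rr j l = C ((rr j l).coeff 0) := by
      intro j l
      exact eq_C_of_natDegree_le_zero (le_of_eq (hdegr0 j l))
    have hrconst : ∀ (j : ℤ) (l : ℂ), (rr j l).coeff 0 = (rr j 0).coeff 0 := by
      intro j
      refine PFs.ext_of_cofinite ((hPFr j).coeff 0) (PFs.const _) (Set.finite_singleton 0) ?_
      intro l hl
      have hlne : (l:ℂ) ≠ 0 := by simpa using hl
      have h := hE4 0 j l 0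
      rw [hpf 0 l, hqf 0 l] at h
      simp only [zpow_zero, map_one, one_mul, zero_add, add_zero] at h
      rw [hrc j 0, sh_C, sh_linX] at h
      conv_lhs at h => rw [hrc j l]
      have h1 := congrArg (fun q => Polynomial.coeff q 0) h
      simp only [coeff_C_mul, coeff_sub, mul_coeff_zero, coeff_add, coeff_X_zero, coeff_C,
        zero_add] at h1
      norm_num at h1
      -- h1 : (1/2*l) * (rr j l).coeff 0 = ((a*l+b) - (a'*l+b')) * (rr j 0).coeff 0
      rw [ha', hb'] at h1
      have h2 : (1/2*l) * ((rr j l).coeff 0) = (1/2*l) * ((rr j 0).coeff 0) := by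
        linear_combination h1
      exact mul_left_cancel₀ (by simpa using hlne) h2
    set t := (rr 0 (0:ℂ)).coeff 0 with htdef
    have hKne' : ∀ j : ℤ, (rr j (0:ℂ)).coeff 0 ≠ 0 := by
      intro j hz
      apply hrne j 0
      rw [hrc j 0, hz, map_zero]
    have htne : t ≠ 0 := hKne' 0
    have hrc2 : ∀ (j : ℤ) (l : ℂ), rr j l = C ((rr j 0).coeff 0) := by
      intro j l
      rw [hrc j l, hrconst j l]
    have hsf : ∀ (i : ℤ) (l : ℂ),
        ss i l = C (((rr i 0).coeff 0)⁻¹ * d ^ (i+i)) * (X + C (a'*(l+l) + b')) := by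
      intro i l
      have h := h2a' i l
      rw [hrc2 i l, sh_C] at h
      apply mul_left_cancel₀ (hCne _ (hKne' i))
      rw [h, show (C ((rr i 0).coeff 0) : P) * (C (((rr i 0).coeff 0)⁻¹ * d^(i+i)) * (X + C (a'*(l+l)+b')))
          = (C ((rr i 0).coeff 0) * C (((rr i 0).coeff 0)⁻¹ * d^(i+i))) * (X + C (a'*(l+l)+b')) from by ring,
        ← map_mul, show (rr i 0).coeff 0 * (((rr i 0).coeff 0)⁻¹ * d^(i+i)) = d^(i+i) from by
          rw [← mul_assoc, mul_inv_cancel₀ (hKne' i), one_mul]]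
    have hdc : ∀ i : ℤ, d ^ i = c ^ i := by
      intro i
      have h := hE4 i 0 1 0
      rw [hpf i 1, hqf i 1, hrc2 0 0, hrc2 (i+0) (1+0), sh_C, sh_zero'] at h
      have h1 := congrArg (fun q => Polynomial.coeff q 1) h
      simp only [coeff_C_mul, coeff_mul_C, coeff1_Clin, coeff_C, mul_one] at h1
      norm_num at h1
      have h2 : (rr 0 (0:ℂ)).coeff 0 * (c^i - d^i) = 0 := by linear_combination -h1
      have h3 := (mul_eq_zero.mp h2).resolve_left (hKne' 0)
      linear_combination -h3
    have hKrel : ∀ i : ℤ, (rr i (0:ℂ)).coeff 0 = t * c ^ i := by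
      intro i
      have h := hE5 i 0 0 0
      rw [hpf (i+0) (0+0), hsf 0 0, hsf i 0, sh_zero', sh_zero', hrc2 i 0, hrc2 0 0] at h
      have h1 := congrArg (fun q => Polynomial.coeff q 1) h
      simp only [coeff_C_mul, coeff_mul_C, coeff1_Clin, coeff1_lin, mul_one] at h1
      simp only [add_zero, zpow_zero] at h1
      rw [hdc (i+i), show c^(i+i) = c^i * c^i from zpow_add₀ hc i i] at h1
      have hcine : (c:ℂ)^i ≠ 0 := zpow_ne_zero _ hc
      have hsq : ((rr i (0:ℂ)).coeff 0 - t * c ^ i)^2 = 0 := by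
        simp only [coeff_add, coeff_mul_C, coeff_C_mul, coeff1_lin, coeff_C_zero, mul_one, coeff_X_one,
          coeff_C_ne_zero one_ne_zero, add_zero] at h1
        rw [← htdef] at h1
        field_simp [hKne' i, htne] at h1
        linear_combination -h1
      have h5 := pow_eq_zero_iff (two_ne_zero) |>.mp hsq
      linear_combination h5
    have hss2 : ∀ (i : ℤ) (l : ℂ), ss i l = C (t⁻¹ * c^i) * (X + C ((2*a-1)*l + b)) := by
      intro i l
      rw [hsf i l, hKrel i, hdc (i+i), ha', hb',
        show (a - 1/2)*(l+l)+b = (2*a-1)*l+b from by ring,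
        show c^(i+i) = c^i * c^i from zpow_add₀ hc i i]
      congr 2
      have hcine : (c:ℂ)^i ≠ 0 := zpow_ne_zero _ hc
      field_simp
    have hrr2 : ∀ (i : ℤ) (l : ℂ), rr i l = C (t * c^i) := by
      intro i l
      rw [hrc2 i l, hKrel i]
    have hcanc : ∀ i : ℤ, (C t : P) * C (t⁻¹ * c^i) = C (c^i) := by
      intro i
      rw [← map_mul]
      congr 1
      field_simp
    refine ⟨a, b, c, hc, Or.inr ?_⟩
    unfold ClsIso
    refine ⟨scaleSnd t htne, ?_, ?_, ?_, ?_⟩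
    · intro v
      simp only [scaleSnd_apply, dV]
      exact Prod.ext rfl (by ring)
    · intro v hv
      simp only [scaleSnd_apply, hv, mul_zero]
    · intro v hv
      simpa using hv
    · intro i l v
      have hv : v = (v.1, v.2) := rfl
      constructor
      · show (scaleSnd t htne) (LA i l v) = LM' a b c i l ((scaleSnd t htne) v)
        rw [hv, hLA i l v.1 v.2]
        simp only [scaleSnd_apply, LM']
        rw [hpf i l, hqf i l, hdc i, ha', hb', sh_mul, sh_C]
        exact Prod.ext (by ring) (by ring)
      · show (scaleSnd t htne) (GA i l v) = GM' a b c i l ((scaleSnd t htne) v)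
        rw [hv, hGA i l v.1 v.2]
        simp only [scaleSnd_apply, GM']
        rw [hss2 i l, hrr2 i l, sh_mul, sh_C]
        refine Prod.ext ?_ ?_
        · show sh l v.2 * C (t * c^i) = C (c^i) * (C t * sh l v.2)
          rw [map_mul]
          ring
        · show C t * (sh l v.1 * (C (t⁻¹ * c^i) * (X + C ((2*a-1)*l+b))))
            = C (c^i) * sh l v.1 * (X + C ((2*a-1)*l+b))
          linear_combination (sh l v.1 * (X + C ((2*a-1)*l+b))) * hcanc i
end
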